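/- arXiv:math/0303178 — 3 statements merged into one kernel-verified Lean document; each statement's English description precedes it below -/
import Mathlib

section
/- For complex numbers q, a, z with |q| < 1 and |z| < 1, the q-binomial theorem holds: ∑_{n=0}^∞ ((a;q)_n / (q;q)_n) z^n = (az;q)_∞ / (z;q)_∞. -/
open scoped Real

open Filter Topology

/-- The infinite q-Pochhammer symbol `(a;q)_∞ = ∏_{j=0}^∞ (1 - a q^j)`. -/
noncomputable def qPochInf (a q : ℂ) : ℂ := ∏' n : ℕ, (1 - a * q ^ n)

/-- The finite q-Pochhammer symbol `(a;q)_n = ∏_{j=0}^{n-1} (1 - a q^j)`. -/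
noncomputable def qPoch (a q : ℂ) (n : ℕ) : ℂ := ∏ j ∈ Finset.range n, (1 - a * q ^ j)

lemma aux_exp_le {x r : ℝ} (hx : 0 ≤ x) (hxr : x ≤ r) (hr : r < 1) :
    Real.exp (-(x / (1 - r))) ≤ 1 - x := by
  have h1r : 0 < 1 - r := by linarith
  have h1x : 0 < 1 - x := by linarith
  have h2 : 1 + x / (1 - x) ≤ Real.exp (x / (1 - x)) := by
    have := Real.add_one_le_exp (x / (1 - x)); linarith
  have key : (1 - x)⁻¹ ≤ Real.exp (x / (1 - r)) := by
    calc (1 - x)⁻¹ = 1 + x / (1 - x) := by field_simp; ring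
    _ ≤ Real.exp (x / (1 - x)) := h2
    _ ≤ Real.exp (x / (1 - r)) := by
        apply Real.exp_le_exp.2
        apply div_le_div_of_nonneg_left hx h1r
        linarith
  rw [Real.exp_neg]
  have h := inv_anti₀ (by positivity : (0:ℝ) < (1 - x)⁻¹) key
  rwa [inv_inv] at h

lemma geom_partial_le {r : ℝ} (h0 : 0 ≤ r) (h1 : r < 1) (n : ℕ) :
    ∑ j ∈ Finset.range n, r ^ j ≤ (1 - r)⁻¹ := by
  calc ∑ j ∈ Finset.range n, r ^ j
      ≤ ∑' j : ℕ, r ^ j :=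
      Summable.sum_le_tsum _ (fun j _ => pow_nonneg h0 _) (summable_geometric_of_lt_one h0 h1)
    _ = (1 - r)⁻¹ := tsum_geometric_of_lt_one h0 h1

lemma qPoch_norm_le (w q : ℂ) (hq : ‖q‖ < 1) (n : ℕ) :
    ‖qPoch w q n‖ ≤ Real.exp (‖w‖ / (1 - ‖q‖)) := by
  have h1q : (0:ℝ) < 1 - ‖q‖ := by linarith
  rw [qPoch, norm_prod]
  calc ∏ j ∈ Finset.range n, ‖1 - w * q ^ j‖
      ≤ ∏ j ∈ Finset.range n, Real.exp (‖w‖ * ‖q‖ ^ j) := by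
        apply Finset.prod_le_prod (fun j _ => norm_nonneg _)
        intro j _
        calc ‖1 - w * q ^ j‖ ≤ ‖(1:ℂ)‖ + ‖w * q ^ j‖ := norm_sub_le _ _
        _ = 1 + ‖w‖ * ‖q‖ ^ j := by simp [norm_mul, norm_pow]
        _ ≤ Real.exp (‖w‖ * ‖q‖ ^ j) := by
            have := Real.add_one_le_exp (‖w‖ * ‖q‖ ^ j); linarith
    _ = Real.exp (∑ j ∈ Finset.range n, ‖w‖ * ‖q‖ ^ j) := by rw [Real.exp_sum]
    _ ≤ Real.exp (‖w‖ / (1 - ‖q‖)) := by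
        apply Real.exp_le_exp.2
        rw [← Finset.mul_sum, div_eq_mul_inv]
        exact mul_le_mul_of_nonneg_left (geom_partial_le (norm_nonneg _) hq n)
          (norm_nonneg _)

lemma qPoch_norm_ge (w q : ℂ) (hw : ‖w‖ < 1) (hq : ‖q‖ < 1) (n : ℕ) :
    Real.exp (-(‖w‖ / (1 - ‖q‖) / (1 - ‖w‖))) ≤ ‖qPoch w q n‖ := by
  have h1q : (0:ℝ) < 1 - ‖q‖ := by linarith
  have h1w : (0:ℝ) < 1 - ‖w‖ := by linarith
  rw [qPoch, norm_prod]
  have hfac : ∀ j : ℕ, Real.exp (-(‖w‖ * ‖q‖ ^ j / (1 - ‖w‖))) ≤ ‖1 - w * q ^ j‖ := by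
    intro j
    have hx : (0:ℝ) ≤ ‖w‖ * ‖q‖ ^ j := by positivity
    have hxr : ‖w‖ * ‖q‖ ^ j ≤ ‖w‖ :=
      mul_le_of_le_one_right (norm_nonneg _) (pow_le_one₀ (norm_nonneg _) hq.le)
    calc Real.exp (-(‖w‖ * ‖q‖ ^ j / (1 - ‖w‖)))
        ≤ 1 - ‖w‖ * ‖q‖ ^ j := aux_exp_le hx hxr hw
      _ = ‖(1:ℂ)‖ - ‖w * q ^ j‖ := by simp [norm_mul, norm_pow]
      _ ≤ ‖1 - w * q ^ j‖ := norm_sub_norm_le _ _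
  calc Real.exp (-(‖w‖ / (1 - ‖q‖) / (1 - ‖w‖)))
      ≤ Real.exp (-(∑ j ∈ Finset.range n, ‖w‖ * ‖q‖ ^ j / (1 - ‖w‖))) := by
        apply Real.exp_le_exp.2
        apply neg_le_neg
        calc ∑ j ∈ Finset.range n, ‖w‖ * ‖q‖ ^ j / (1 - ‖w‖)
            = (∑ j ∈ Finset.range n, ‖q‖ ^ j) * (‖w‖ / (1 - ‖w‖)) := by
              rw [Finset.sum_mul]; congr 1; ext j; ring
          _ ≤ (1 - ‖q‖)⁻¹ * (‖w‖ / (1 - ‖w‖)) :=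
              mul_le_mul_of_nonneg_right (geom_partial_le (norm_nonneg _) hq n)
                (by positivity)
          _ = ‖w‖ / (1 - ‖q‖) / (1 - ‖w‖) := by field_simp
    _ = ∏ j ∈ Finset.range n, Real.exp (-(‖w‖ * ‖q‖ ^ j / (1 - ‖w‖))) := by
        rw [← Real.exp_sum]
        congr 1
        rw [Finset.sum_neg_distrib]
    _ ≤ ∏ j ∈ Finset.range n, ‖1 - w * q ^ j‖ :=
        Finset.prod_le_prod (fun j _ => (Real.exp_pos _).le) (fun j _ => hfac j)

lemma qPoch_ne_zero (w q : ℂ) (hw : ‖w‖ < 1) (hq : ‖q‖ < 1) (n : ℕ) :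
    qPoch w q n ≠ 0 := by
  have := qPoch_norm_ge w q hw hq n
  have h := (Real.exp_pos _).trans_le this
  simpa [norm_pos_iff] using h

lemma multipliable_qfac (w q : ℂ) (hq : ‖q‖ < 1) :
    Multipliable (fun n : ℕ => 1 - w * q ^ n) := by
  by_cases hzero : ∃ n : ℕ, 1 - w * q ^ n = 0
  · obtain ⟨n, hn⟩ := hzero
    refine ⟨0, ?_⟩
    have hev : ∀ᶠ s : Finset ℕ in atTop, (fun s : Finset ℕ => (0:ℂ)) s
        = ∏ i ∈ s, (1 - w * q ^ i) := by
      filter_upwards [Filter.eventually_ge_atTop ({n} : Finset ℕ)] with s hs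
      exact (Finset.prod_eq_zero (hs (Finset.mem_singleton_self n)) hn).symm
    exact tendsto_const_nhds.congr' hev
  · push_neg at hzero
    apply Complex.multipliable_of_summable_log
    apply Summable.of_norm_bounded_eventually_nat (g := fun n => 3 / 2 * (‖w‖ * ‖q‖ ^ n))
    · exact ((summable_geometric_of_lt_one (norm_nonneg _) hq).mul_left _).mul_left _
    · have htend : Tendsto (fun n : ℕ => ‖w‖ * ‖q‖ ^ n) atTop (𝓝 0) := by
        simpa using (tendsto_pow_atTop_nhds_zero_of_lt_one (norm_nonneg q) hq).const_mul ‖w‖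
      filter_upwards [htend.eventually_le_const (by norm_num : (0:ℝ) < 1/2)] with n hn
      have h1 : ‖-(w * q ^ n)‖ ≤ 1 / 2 := by
        rw [norm_neg, norm_mul, norm_pow]; exact hn
      have := Complex.norm_log_one_add_half_le_self h1
      rw [norm_neg, norm_mul, norm_pow] at this
      have he : (1 : ℂ) + -(w * q ^ n) = 1 - w * q ^ n := by ring
      rw [he] at this
      exact this

lemma tendsto_qPoch (w q : ℂ) (hq : ‖q‖ < 1) :
    Tendsto (fun n => qPoch w q n) atTop (𝓝 (qPochInf w q)) :=
  (multipliable_qfac w q hq).hasProd.tendsto_prod_nat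

lemma qPochInf_ne_zero (w q : ℂ) (hw : ‖w‖ < 1) (hq : ‖q‖ < 1) :
    qPochInf w q ≠ 0 := by
  have hge : Real.exp (-(‖w‖ / (1 - ‖q‖) / (1 - ‖w‖))) ≤ ‖qPochInf w q‖ :=
    ge_of_tendsto' ((tendsto_qPoch w q hq).norm) (fun n => qPoch_norm_ge w q hw hq n)
  have := (Real.exp_pos _).trans_le hge
  simpa [norm_pos_iff] using this

/-- The q-binomial theorem: `∑_{n≥0} ((a;q)_n/(q;q)_n) z^n = (az;q)_∞/(z;q)_∞`
for `|q| < 1` and `|z| < 1`. -/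
theorem q_binomial_theorem (q a z : ℂ) (hq : ‖q‖ < 1) (hz : ‖z‖ < 1) :
    ∑' n : ℕ, (qPoch a q n / qPoch q q n) * z ^ n
      = qPochInf (a * z) q / qPochInf z q := by
  have h1q : (0:ℝ) < 1 - ‖q‖ := by linarith
  have h1z : (0:ℝ) < 1 - ‖z‖ := by linarith
  set c : ℕ → ℂ := fun n => qPoch a q n / qPoch q q n with hc
  set C : ℝ := Real.exp (‖a‖ / (1 - ‖q‖)) / Real.exp (-(‖q‖ / (1 - ‖q‖) / (1 - ‖q‖))) with hCdef
  have hC0 : 0 < C := by positivity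
  have hCb : ∀ n, ‖c n‖ ≤ C := by
    intro n
    rw [hc]
    simp only [norm_div]
    exact div_le_div₀ (Real.exp_pos _).le (qPoch_norm_le a q hq n) (Real.exp_pos _)
      (qPoch_norm_ge q q hq hq n)
  -- master summability lemma
  have hsum : ∀ (d : ℕ → ℂ) (D : ℝ), (∀ n, ‖d n‖ ≤ D) → ∀ (w : ℂ), ‖w‖ < 1 →
      Summable (fun n => d n * w ^ n) := by
    intro d D hD w hw
    have hD0 : 0 ≤ D := le_trans (norm_nonneg _) (hD 0)
    apply Summable.of_norm_bounded
      ((summable_geometric_of_lt_one (norm_nonneg _) hw).mul_left D)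
    intro n
    rw [norm_mul, norm_pow]
    gcongr
    exact hD n
  set F : ℂ → ℂ := fun w => ∑' n : ℕ, c n * w ^ n with hFdef
  -- key coefficient recurrence
  have key : ∀ n : ℕ, c (n + 1) * (1 - q ^ (n + 1)) = c n * (1 - a * q ^ n) := by
    intro n
    have e1 : qPoch a q (n + 1) = qPoch a q n * (1 - a * q ^ n) := Finset.prod_range_succ _ _
    have e2 : qPoch q q (n + 1) = qPoch q q n * (1 - q * q ^ n) := Finset.prod_range_succ _ _
    have hne1 : qPoch q q n ≠ 0 := qPoch_ne_zero q q hq hq n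
    have hne2 : (1 : ℂ) - q * q ^ n ≠ 0 := by
      intro h
      have : q * q ^ n = 1 := by linear_combination -h
      have : ‖q * q ^ n‖ < 1 := by
        rw [norm_mul, norm_pow]
        calc ‖q‖ * ‖q‖ ^ n ≤ ‖q‖ * 1 :=
          mul_le_mul_of_nonneg_left (pow_le_one₀ (norm_nonneg _) hq.le) (norm_nonneg _)
        _ < 1 := by simpa using hq
      rw [‹q * q ^ n = 1›] at this
      simp at this
    have hp : (1 : ℂ) - q ^ (n + 1) = 1 - q * q ^ n := by rw [pow_succ]; ring
    rw [hc]
    simp only [e1, e2, hp]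
    rw [div_mul_eq_mul_div, div_mul_eq_mul_div, div_eq_div_iff (mul_ne_zero hne1 hne2) hne1]
    ring
  -- functional equation
  have funeq : ∀ w : ℂ, ‖w‖ < 1 → (1 - w) * F w = (1 - a * w) * F (q * w) := by
    intro w hw
    have hqw : ‖q * w‖ < 1 := by
      rw [norm_mul]
      calc ‖q‖ * ‖w‖ ≤ 1 * ‖w‖ := mul_le_mul_of_nonneg_right hq.le (norm_nonneg _)
      _ = ‖w‖ := one_mul _
      _ < 1 := hw
    have hs1 : Summable (fun n => c n * w ^ n) := hsum c C hCb w hw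
    have hs3 : Summable (fun n => c n * (q * w) ^ n) := hsum c C hCb (q * w) hqw
    set T1 : ℂ := ∑' n : ℕ, c n * w ^ n with hT1
    set T3 : ℂ := ∑' n : ℕ, c n * (q * w) ^ n with hT3
    have hu : Summable (fun n => c n * (1 - q ^ n) * w ^ n) := by
      apply hsum (fun n => c n * (1 - q ^ n)) (C * 2) ?_ w hw
      intro n
      rw [norm_mul]
      have : ‖(1:ℂ) - q ^ n‖ ≤ 2 := by
        calc ‖(1:ℂ) - q ^ n‖ ≤ ‖(1:ℂ)‖ + ‖q ^ n‖ := norm_sub_le _ _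
        _ ≤ 1 + 1 := by
            simp only [norm_one, norm_pow]
            have := pow_le_one₀ (norm_nonneg q) hq.le (n := n)
            linarith
        _ = 2 := by norm_num
      exact mul_le_mul (hCb n) this (norm_nonneg _) hC0.le
    -- shift identity : ∑' u = ∑' v
    have hshift : ∑' n : ℕ, c n * (1 - q ^ n) * w ^ n
        = ∑' n : ℕ, c n * (1 - a * q ^ n) * w ^ (n + 1) := by
      rw [Summable.tsum_eq_zero_add hu]
      simp only [pow_zero, sub_self, mul_zero, zero_mul, mul_one, zero_add]
      apply tsum_congr
      intro n
      rw [key n]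
    -- rewrite both sides of shift identity in terms of T1, T3
    have lhs_eq : ∑' n : ℕ, c n * (1 - q ^ n) * w ^ n = T1 - T3 := by
      have : ∀ n : ℕ, c n * (1 - q ^ n) * w ^ n = c n * w ^ n - c n * (q * w) ^ n := by
        intro n; rw [mul_pow]; ring
      rw [tsum_congr this, Summable.tsum_sub hs1 hs3]
    have rhs_eq : ∑' n : ℕ, c n * (1 - a * q ^ n) * w ^ (n + 1) = T1 * w - a * (T3 * w) := by
      have : ∀ n : ℕ, c n * (1 - a * q ^ n) * w ^ (n + 1)
          = c n * w ^ n * w - a * (c n * (q * w) ^ n * w) := by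
        intro n; rw [pow_succ, mul_pow]; ring
      rw [tsum_congr this, Summable.tsum_sub (hs1.mul_right w) ((hs3.mul_right w).mul_left a),
        tsum_mul_right, tsum_mul_left, tsum_mul_right]
    have hkey2 : T1 - T3 = T1 * w - a * (T3 * w) := by
      rw [← lhs_eq, ← rhs_eq]; exact hshift
    show (1 - w) * T1 = (1 - a * w) * T3
    linear_combination hkey2
  -- iteration
  have hnormpow : ∀ N : ℕ, ‖q ^ N * z‖ < 1 := by
    intro N
    rw [norm_mul, norm_pow]
    calc ‖q‖ ^ N * ‖z‖ ≤ 1 * ‖z‖ := by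
          gcongr; exact pow_le_one₀ (norm_nonneg _) hq.le
    _ = ‖z‖ := one_mul _
    _ < 1 := hz
  have iter : ∀ N : ℕ, F z * qPoch z q N = F (q ^ N * z) * qPoch (a * z) q N := by
    intro N
    induction N with
    | zero => simp [qPoch]
    | succ N ih =>
      have heq := funeq (q ^ N * z) (hnormpow N)
      have hpow : q ^ (N + 1) * z = q * (q ^ N * z) := by rw [pow_succ]; ring
      have e1 : qPoch z q (N + 1) = qPoch z q N * (1 - z * q ^ N) := Finset.prod_range_succ _ _
      have e2 : qPoch (a * z) q (N + 1) = qPoch (a * z) q N * (1 - a * z * q ^ N) :=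
        Finset.prod_range_succ _ _
      rw [e1, e2, hpow]
      linear_combination (1 - z * q ^ N) * ih + qPoch (a * z) q N * heq
  -- limit of F (q^N * z)
  have hF1 : Tendsto (fun N : ℕ => F (q ^ N * z)) atTop (𝓝 1) := by
    have hbound : ∀ N : ℕ, ‖F (q ^ N * z) - 1‖ ≤ C / (1 - ‖z‖) * (‖z‖ * ‖q‖ ^ N) := by
      intro N
      have hwz : ‖q ^ N * z‖ < 1 := hnormpow N
      have hwle : ‖q ^ N * z‖ ≤ ‖z‖ := by
        rw [norm_mul, norm_pow]
        calc ‖q‖ ^ N * ‖z‖ ≤ 1 * ‖z‖ := by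
              gcongr; exact pow_le_one₀ (norm_nonneg _) hq.le
        _ = ‖z‖ := one_mul _
      set w := q ^ N * z with hw
      have hc0 : c 0 = 1 := by simp [hc, qPoch]
      have hFsplit : F w = 1 + ∑' n : ℕ, c (n + 1) * w ^ (n + 1) := by
        have hFw : F w = ∑' n : ℕ, c n * w ^ n := rfl
        rw [hFw, Summable.tsum_eq_zero_add (hsum c C hCb w hwz)]
        simp [hc0]
      rw [hFsplit]
      simp only [add_sub_cancel_left]
      have hgeom : HasSum (fun n : ℕ => C * ‖w‖ * ‖z‖ ^ n) (C * ‖w‖ * (1 - ‖z‖)⁻¹) :=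
        (hasSum_geometric_of_lt_one (norm_nonneg _) hz).mul_left _
      calc ‖∑' n : ℕ, c (n + 1) * w ^ (n + 1)‖
          ≤ C * ‖w‖ * (1 - ‖z‖)⁻¹ := by
            apply tsum_of_norm_bounded hgeom
            intro n
            rw [norm_mul, norm_pow, pow_succ]
            calc ‖c (n + 1)‖ * (‖w‖ ^ n * ‖w‖)
                ≤ C * (‖z‖ ^ n * ‖w‖) :=
                  mul_le_mul (hCb _) (mul_le_mul_of_nonneg_right
                    (pow_le_pow_left₀ (norm_nonneg _) hwle n) (norm_nonneg _))
                    (by positivity) hC0.le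
              _ = C * ‖w‖ * ‖z‖ ^ n := by ring
        _ ≤ C / (1 - ‖z‖) * (‖z‖ * ‖q‖ ^ N) := by
            rw [hw, norm_mul, norm_pow]
            rw [div_eq_mul_inv]
            calc C * (‖q‖ ^ N * ‖z‖) * (1 - ‖z‖)⁻¹
                = C * (1 - ‖z‖)⁻¹ * (‖z‖ * ‖q‖ ^ N) := by ring
            _ ≤ C * (1 - ‖z‖)⁻¹ * (‖z‖ * ‖q‖ ^ N) := le_refl _
    have hg0 : Tendsto (fun N : ℕ => C / (1 - ‖z‖) * (‖z‖ * ‖q‖ ^ N)) atTop (𝓝 0) := by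
      have : Tendsto (fun N : ℕ => ‖q‖ ^ N) atTop (𝓝 0) :=
        tendsto_pow_atTop_nhds_zero_of_lt_one (norm_nonneg _) hq
      simpa using ((this.const_mul ‖z‖).const_mul (C / (1 - ‖z‖)))
    have hd : Tendsto (fun N : ℕ => F (q ^ N * z) - 1) atTop (𝓝 0) :=
      squeeze_zero_norm hbound hg0
    have := hd.add_const 1
    simpa using this
  -- combine limits
  have lim1 : Tendsto (fun N : ℕ => F z * qPoch z q N) atTop (𝓝 (F z * qPochInf z q)) :=
    (tendsto_qPoch z q hq).const_mul _
  have lim2 : Tendsto (fun N : ℕ => F z * qPoch z q N) atTop (𝓝 (1 * qPochInf (a * z) q)) := by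
    apply (hF1.mul (tendsto_qPoch (a * z) q hq)).congr
    intro N
    exact (iter N).symm
  have hmain : F z * qPochInf z q = 1 * qPochInf (a * z) q := tendsto_nhds_unique lim1 lim2
  have hne : qPochInf z q ≠ 0 := qPochInf_ne_zero z q hz hq
  show F z = qPochInf (a * z) q / qPochInf z q
  rw [eq_div_iff hne]
  linear_combination hmain
end

section
/- (Trigonometric Ramanujan integral) Let τ ∈ ℍ, q = exp(2πiτ), and let c, d ∈ ℂ with |c|, |d| < |q|^{-1/2}. Then (1/2πi) ∮_{|z|=1} [(-q^{1/2} z^{-1}; q)_∞ (-q^{1/2} z; q)_∞ / ((-q^{1/2} c z^{-1}; q)_∞ (-q^{1/2} d z; q)_∞)] · (q;q)_∞ dz/z = (qc; q)_∞ (qd; q)_∞ / (qcd; q)_∞. -/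
open scoped Real

set_option maxHeartbeats 1000000

namespace QPoch

/-- finite product bound: `‖∏ (1+u i) - 1‖ ≤ ∏ (1+‖u i‖) - 1`. -/
lemma finprod_sub_one_norm (u : ℕ → ℂ) (N : ℕ) :
    ‖(∏ i ∈ Finset.range N, (1 + u i)) - 1‖ ≤ (∏ i ∈ Finset.range N, (1 + ‖u i‖)) - 1 := by
  induction N with
  | zero => simp
  | succ n ih =>
    rw [Finset.prod_range_succ, Finset.prod_range_succ]
    have h1 : (∏ i ∈ Finset.range n, (1 + u i)) * (1 + u n) - 1
        = ((∏ i ∈ Finset.range n, (1 + u i)) - 1) * (1 + u n) + u n := by ring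
    rw [h1]
    have h2 : ‖((∏ i ∈ Finset.range n, (1 + u i)) - 1) * (1 + u n) + u n‖
        ≤ ‖(∏ i ∈ Finset.range n, (1 + u i)) - 1‖ * ‖1 + u n‖ + ‖u n‖ := by
      refine le_trans (norm_add_le _ _) ?_
      rw [norm_mul]
    refine h2.trans ?_
    have h3 : ‖(1 : ℂ) + u n‖ ≤ 1 + ‖u n‖ := by
      refine le_trans (norm_add_le _ _) ?_; simp
    have h4 : (0:ℝ) ≤ ∏ i ∈ Finset.range n, (1 + ‖u i‖) - 1 := by
      have : (1:ℝ) ≤ ∏ i ∈ Finset.range n, (1 + ‖u i‖) := by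
        calc (1:ℝ) = ∏ _i ∈ Finset.range n, (1:ℝ) := by simp
        _ ≤ _ := Finset.prod_le_prod (fun i _ => by norm_num) (fun i _ => by nlinarith [norm_nonneg (u i)])
      linarith
    have h5 : ‖(∏ i ∈ Finset.range n, (1 + u i)) - 1‖ * ‖1 + u n‖
        ≤ ((∏ i ∈ Finset.range n, (1 + ‖u i‖)) - 1) * (1 + ‖u n‖) :=
      mul_le_mul ih h3 (norm_nonneg _) h4
    nlinarith [norm_nonneg (u n)]

lemma finprod_le_exp (u : ℕ → ℂ) (N : ℕ) :
    (∏ i ∈ Finset.range N, (1 + ‖u i‖)) ≤ Real.exp (∑ i ∈ Finset.range N, ‖u i‖) := by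
  induction N with
  | zero => simp
  | succ n ih =>
    rw [Finset.prod_range_succ, Finset.sum_range_succ, Real.exp_add]
    have h1 : 1 + ‖u n‖ ≤ Real.exp ‖u n‖ := by
      have := Real.add_one_le_exp ‖u n‖; linarith
    exact mul_le_mul ih h1 (by positivity) (Real.exp_nonneg _)

lemma finprod_norm_ge (u : ℕ → ℂ) (r : ℕ → ℝ) (hr : ∀ i, ‖u i‖ ≤ r i) (hr1 : ∀ i, r i ≤ 1)
    (N : ℕ) :
    (∏ i ∈ Finset.range N, (1 - r i)) ≤ ‖∏ i ∈ Finset.range N, (1 + u i)‖ := by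
  induction N with
  | zero => simp
  | succ n ih =>
    rw [Finset.prod_range_succ, Finset.prod_range_succ, norm_mul]
    have h1 : 1 - r n ≤ ‖(1:ℂ) + u n‖ := by
      have h := norm_add_le (1 + u n) (-u n)
      simp only [add_neg_cancel_right, norm_one, norm_neg] at h
      have h2 := hr n
      linarith
    have hnn : (0:ℝ) ≤ ∏ i ∈ Finset.range n, (1 - r i) :=
      Finset.prod_nonneg fun i _ => by have := hr1 i; linarith
    have := hr n
    have h0 : 0 ≤ 1 - r n := by have := hr1 n; linarith
    exact mul_le_mul ih h1 h0 (norm_nonneg _)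

end QPoch

section Part2
variable {q : ℂ} (hq1 : ‖q‖ < 1)

include hq1 in
lemma summable_aq (a : ℂ) : Summable (fun n : ℕ => ‖a * q ^ n‖) := by
  have : (fun n : ℕ => ‖a * q ^ n‖) = fun n => ‖a‖ * ‖q‖ ^ n := by
    ext n; rw [norm_mul, norm_pow]
  rw [this]
  exact (summable_geometric_of_lt_one (norm_nonneg q) hq1).mul_left _

include hq1 in
lemma multipliable_qp (a : ℂ) : Multipliable (fun n : ℕ => 1 - a * q ^ n) := by
  by_cases h0 : ∃ n : ℕ, 1 - a * q ^ n = 0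
  · obtain ⟨n0, hn0⟩ := h0
    refine ⟨0, ?_⟩
    have hev : (fun s : Finset ℕ => ∏ i ∈ s, (1 - a * q ^ i)) =ᶠ[Filter.atTop]
        (fun _ => (0:ℂ)) := by
      filter_upwards [Filter.eventually_ge_atTop ({n0} : Finset ℕ)] with s hs
      exact Finset.prod_eq_zero (hs (Finset.mem_singleton_self n0)) hn0
    exact Filter.Tendsto.congr' hev.symm tendsto_const_nhds
  · push_neg at h0
    refine Complex.multipliable_of_summable_log ?_
    have hsum := summable_aq hq1 a
    refine Summable.of_norm_bounded_eventually_nat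
      (hsum.mul_left (3/2)) ?_
    have hten : Filter.Tendsto (fun n : ℕ => ‖a * q ^ n‖) Filter.atTop (nhds 0) :=
      hsum.tendsto_atTop_zero
    filter_upwards [hten.eventually_le_const (by norm_num : (0:ℝ) < 1/2)] with n hn
    have h1 : (1 : ℂ) - a * q ^ n = 1 + (-(a * q ^ n)) := by ring
    rw [h1]
    have := Complex.norm_log_one_add_half_le_self (z := -(a * q ^ n)) (by rwa [norm_neg])
    simpa [norm_neg] using this

include hq1 in
lemma qp_shift (a : ℂ) : qPochInf a q = (1 - a) * qPochInf (a * q) q := by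
  have hmul1 := multipliable_qp hq1 a
  have hmul2 := multipliable_qp hq1 (a * q)
  have t1 : Filter.Tendsto (fun N => ∏ i ∈ Finset.range N, (1 - a * q ^ i))
      Filter.atTop (nhds (qPochInf a q)) := hmul1.hasProd.tendsto_prod_nat
  have t2 : Filter.Tendsto (fun N => ∏ i ∈ Finset.range N, (1 - (a*q) * q ^ i))
      Filter.atTop (nhds (qPochInf (a*q) q)) := hmul2.hasProd.tendsto_prod_nat
  have t3 : Filter.Tendsto (fun N => (1-a) * ∏ i ∈ Finset.range N, (1 - (a*q) * q ^ i))
      Filter.atTop (nhds ((1-a) * qPochInf (a*q) q)) := t2.const_mul _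
  have key : ∀ N, (1-a) * ∏ i ∈ Finset.range N, (1 - (a*q) * q ^ i)
      = ∏ i ∈ Finset.range (N+1), (1 - a * q ^ i) := by
    intro N
    rw [Finset.prod_range_succ']
    simp only [pow_zero, mul_one]
    rw [mul_comm]
    congr 1
    exact Finset.prod_congr rfl (fun i _ => by ring)
  have t4 : Filter.Tendsto (fun N => ∏ i ∈ Finset.range (N+1), (1 - a * q ^ i))
      Filter.atTop (nhds (qPochInf a q)) :=
    t1.comp (Filter.tendsto_add_atTop_nat 1)
  rw [← funext key] at t4
  exact (tendsto_nhds_unique t4 t3)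

include hq1 in
lemma qp_split (a : ℂ) (N : ℕ) :
    qPochInf a q = (∏ i ∈ Finset.range N, (1 - a * q ^ i)) * qPochInf (a * q ^ N) q := by
  induction N with
  | zero => simp
  | succ n ih =>
    rw [ih, qp_shift hq1 (a * q ^ n), Finset.prod_range_succ]
    have : a * q ^ n * q = a * q ^ (n+1) := by ring
    rw [this]; ring

lemma qp_zero : qPochInf 0 q = 1 := by
  simp [qPochInf]

end Part2

section Part3
variable {q : ℂ} (hq1 : ‖q‖ < 1)

include hq1 in
lemma qp_tsum_norm (a : ℂ) : ∑' n : ℕ, ‖a * q ^ n‖ = ‖a‖ * (1 - ‖q‖)⁻¹ := by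
  have : (fun n : ℕ => ‖a * q ^ n‖) = fun n => ‖a‖ * ‖q‖ ^ n := by
    ext n; rw [norm_mul, norm_pow]
  rw [this, tsum_mul_left, tsum_geometric_of_lt_one (norm_nonneg q) hq1]

include hq1 in
/-- `‖qPochInf a q - 1‖ ≤ exp (‖a‖/(1-‖q‖)) - 1`. -/
lemma qp_sub_one_norm (a : ℂ) :
    ‖qPochInf a q - 1‖ ≤ Real.exp (‖a‖ * (1 - ‖q‖)⁻¹) - 1 := by
  have hmul := multipliable_qp hq1 a
  have t1 : Filter.Tendsto (fun N => ‖(∏ i ∈ Finset.range N, (1 - a * q ^ i)) - 1‖)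
      Filter.atTop (nhds ‖qPochInf a q - 1‖) :=
    ((hmul.hasProd.tendsto_prod_nat).sub tendsto_const_nhds).norm
  refine le_of_tendsto t1 (Filter.Eventually.of_forall fun N => ?_)
  have h1 := QPoch.finprod_sub_one_norm (fun n => -(a * q ^ n)) N
  have e1 : (fun i : ℕ => 1 + -(a * q ^ i)) = fun i => 1 - a * q ^ i := by ext i; ring
  simp only [e1, norm_neg] at h1
  refine h1.trans ?_
  have h2 := QPoch.finprod_le_exp (fun n => (a * q ^ n)) N
  have h3 : ∑ i ∈ Finset.range N, ‖a * q ^ i‖ ≤ ‖a‖ * (1 - ‖q‖)⁻¹ := by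
    rw [← qp_tsum_norm hq1 a]
    exact Summable.sum_le_tsum _ (fun i _ => norm_nonneg _) (summable_aq hq1 a)
  have := Real.exp_le_exp.mpr h3
  linarith

include hq1 in
lemma qp_norm_le (a : ℂ) : ‖qPochInf a q‖ ≤ Real.exp (‖a‖ * (1 - ‖q‖)⁻¹) := by
  have h := qp_sub_one_norm hq1 a
  have := norm_add_le (qPochInf a q - 1) (1:ℂ)
  simp only [sub_add_cancel, norm_one] at this
  have he : (1:ℝ) ≤ Real.exp (‖a‖ * (1-‖q‖)⁻¹) := by
    have h1 : (0:ℝ) < 1 - ‖q‖ := by linarith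
    have h2 : (0:ℝ) ≤ ‖a‖ * (1-‖q‖)⁻¹ := by positivity
    calc (1:ℝ) = Real.exp 0 := by simp
    _ ≤ _ := Real.exp_le_exp.mpr h2
  linarith

lemma exp_half_lt_two : Real.exp ((2:ℝ)⁻¹) < 2 := by
  have h1 : ((2:ℝ))⁻¹ < Real.log 2 := by
    have := Real.log_two_gt_d9; norm_num at this ⊢; linarith
  calc Real.exp ((2:ℝ)⁻¹) < Real.exp (Real.log 2) := Real.exp_lt_exp.mpr h1
  _ = 2 := Real.exp_log (by norm_num)

include hq1 in
/-- if the tail is small, the product is bounded below. -/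
lemma qp_tail_lb (a : ℂ) (ha : ‖a‖ * (1 - ‖q‖)⁻¹ ≤ 2⁻¹) :
    2 - Real.exp ((2:ℝ)⁻¹) ≤ ‖qPochInf a q‖ := by
  have h1 := qp_sub_one_norm hq1 a
  have h2 : Real.exp (‖a‖ * (1-‖q‖)⁻¹) ≤ Real.exp ((2:ℝ)⁻¹) := Real.exp_le_exp.mpr ha
  have h3 := norm_sub_norm_le (qPochInf a q) 1
  simp only [norm_one] at h3
  have h4 : ‖qPochInf a q‖ - 1 ≤ ‖qPochInf a q - 1‖ := by
    have := norm_sub_norm_le (qPochInf a q) (1:ℂ); simpa using this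
  have h5 : 1 - ‖qPochInf a q‖ ≤ ‖qPochInf a q - 1‖ := by
    have := norm_sub_norm_le (1:ℂ) (qPochInf a q)
    simpa [norm_sub_rev] using this
  linarith

include hq1 in
lemma qp_ne_zero (a : ℂ) (h : ∀ n : ℕ, 1 - a * q ^ n ≠ 0) : qPochInf a q ≠ 0 := by
  have h0q : (0:ℝ) ≤ ‖q‖ := norm_nonneg q
  -- choose N with tail small
  have hten : Filter.Tendsto (fun N : ℕ => ‖a * q ^ N‖ * (1 - ‖q‖)⁻¹)
      Filter.atTop (nhds 0) := by
    have := (summable_aq hq1 a).tendsto_atTop_zero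
    simpa using this.mul_const _
  obtain ⟨N, hN⟩ := (hten.eventually_le_const (by norm_num : (0:ℝ) < 2⁻¹)).exists
  rw [qp_split hq1 a N]
  refine mul_ne_zero (Finset.prod_ne_zero_iff.mpr fun i _ => h i) ?_
  have := qp_tail_lb hq1 (a * q ^ N) hN
  have h2 : (0:ℝ) < 2 - Real.exp ((2:ℝ)⁻¹) := by have := exp_half_lt_two; linarith
  intro hcon
  rw [hcon] at this; simp at this; linarith

include hq1 in
lemma qp_ne_zero_of_norm_lt_one {a : ℂ} (ha : ‖a‖ < 1) : qPochInf a q ≠ 0 := by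
  refine qp_ne_zero hq1 a fun n => ?_
  intro hcon
  have : a * q ^ n = 1 := by linear_combination -hcon
  have hn : ‖a * q ^ n‖ < 1 := by
    rw [norm_mul, norm_pow]
    calc ‖a‖ * ‖q‖ ^ n ≤ ‖a‖ * 1 := by
          refine mul_le_mul_of_nonneg_left ?_ (norm_nonneg a)
          exact pow_le_one₀ (norm_nonneg q) hq1.le
    _ < 1 := by simpa using ha
  rw [this] at hn; simp at hn

include hq1 in
/-- uniform lower bound on `‖qPochInf a q‖` for `‖a‖ ≤ r < 1`. -/
lemma qp_uniform_lb {r : ℝ} (hr : r < 1) (hr0 : 0 ≤ r) :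
    ∃ δ : ℝ, 0 < δ ∧ ∀ a : ℂ, ‖a‖ ≤ r → δ ≤ ‖qPochInf a q‖ := by
  have hten : Filter.Tendsto (fun N : ℕ => r * ‖q‖ ^ N * (1 - ‖q‖)⁻¹)
      Filter.atTop (nhds 0) := by
    have h := tendsto_pow_atTop_nhds_zero_of_lt_one (norm_nonneg q) hq1
    have := (h.const_mul r).mul_const ((1 - ‖q‖)⁻¹)
    simpa using this
  obtain ⟨N, hN⟩ := (hten.eventually_le_const (by norm_num : (0:ℝ) < 2⁻¹)).exists
  refine ⟨(1 - r) ^ N * (2 - Real.exp ((2:ℝ)⁻¹)), ?_, fun a ha => ?_⟩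
  · have h2 : (0:ℝ) < 2 - Real.exp ((2:ℝ)⁻¹) := by have := exp_half_lt_two; linarith
    have h1 : (0:ℝ) < 1 - r := by linarith
    exact mul_pos (pow_pos h1 N) h2
  · rw [qp_split hq1 a N, norm_mul]
    have hlow : (1 - r) ^ N ≤ ‖∏ i ∈ Finset.range N, (1 - a * q ^ i)‖ := by
      have h := QPoch.finprod_norm_ge (fun n => -(a * q ^ n)) (fun n => r * ‖q‖ ^ n)
        (fun i => by
          rw [norm_neg, norm_mul, norm_pow]
          exact mul_le_mul_of_nonneg_right ha (by positivity))
        (fun i => by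
          have h2 : ‖q‖ ^ i ≤ 1 := pow_le_one₀ (norm_nonneg q) hq1.le
          have h3 : r * ‖q‖ ^ i ≤ r * 1 := mul_le_mul_of_nonneg_left h2 hr0
          show r * ‖q‖ ^ i ≤ 1
          linarith) N
      have e1 : (fun i : ℕ => 1 + -(a * q ^ i)) = fun i => 1 - a * q ^ i := by ext i; ring
      rw [e1] at h
      refine le_trans ?_ h
      have hr1 : (0:ℝ) ≤ 1 - r := by linarith
      calc (1-r)^N = ∏ _i ∈ Finset.range N, (1-r) := by simp
      _ ≤ ∏ i ∈ Finset.range N, (1 - r * ‖q‖ ^ i) := by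
          refine Finset.prod_le_prod (fun i _ => hr1) (fun i _ => ?_)
          have h2 : ‖q‖ ^ i ≤ 1 := pow_le_one₀ (norm_nonneg q) hq1.le
          have h3 : r * ‖q‖ ^ i ≤ r * 1 := mul_le_mul_of_nonneg_left h2 hr0
          linarith
    have htail : 2 - Real.exp ((2:ℝ)⁻¹) ≤ ‖qPochInf (a * q ^ N) q‖ := by
      refine qp_tail_lb hq1 _ ?_
      have : ‖a * q ^ N‖ ≤ r * ‖q‖ ^ N := by
        rw [norm_mul, norm_pow]
        exact mul_le_mul_of_nonneg_right ha (by positivity)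
      have hq0 : (0:ℝ) ≤ (1 - ‖q‖)⁻¹ := by
        have : (0:ℝ) < 1 - ‖q‖ := by linarith
        positivity
      calc ‖a * q ^ N‖ * (1 - ‖q‖)⁻¹ ≤ r * ‖q‖ ^ N * (1 - ‖q‖)⁻¹ :=
            mul_le_mul_of_nonneg_right this hq0
      _ ≤ 2⁻¹ := hN
    have hr1 : (0:ℝ) ≤ 1 - r := by linarith
    have h1 : (0:ℝ) ≤ (1 - r) ^ N := pow_nonneg hr1 N
    have h2 : (0:ℝ) < 2 - Real.exp ((2:ℝ)⁻¹) := by have := exp_half_lt_two; linarith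
    exact mul_le_mul hlow htail h2.le (norm_nonneg _)

end Part3

section Part4
set_option maxHeartbeats 1000000
variable {q : ℂ} (hq1 : ‖q‖ < 1)

include hq1 in
lemma qp_tendstoUniformlyOn (R : ℝ) (hR : 0 < R) :
    TendstoUniformlyOn (fun N (a : ℂ) => ∏ i ∈ Finset.range N, (1 - a * q ^ i))
      (fun a => qPochInf a q) Filter.atTop (Metric.closedBall 0 R) := by
  have h1q : (0:ℝ) < 1 - ‖q‖ := by linarith
  rw [Metric.tendstoUniformlyOn_iff]
  intro ε hε
  -- error bound: E * (exp (R‖q‖^N/(1-‖q‖)) - 1)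
  set E : ℝ := Real.exp (R * (1 - ‖q‖)⁻¹) with hE
  have hten : Filter.Tendsto
      (fun N : ℕ => E * (Real.exp (R * ‖q‖ ^ N * (1 - ‖q‖)⁻¹) - 1)) Filter.atTop (nhds 0) := by
    have h0 : Filter.Tendsto (fun N : ℕ => R * ‖q‖ ^ N * (1 - ‖q‖)⁻¹) Filter.atTop (nhds 0) := by
      have h := tendsto_pow_atTop_nhds_zero_of_lt_one (norm_nonneg q) hq1
      have := (h.const_mul R).mul_const ((1 - ‖q‖)⁻¹)
      simpa using this
    have h2 : Filter.Tendsto (fun N : ℕ => Real.exp (R * ‖q‖ ^ N * (1 - ‖q‖)⁻¹) - 1)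
        Filter.atTop (nhds 0) := by
      have := (Real.continuous_exp.tendsto 0).comp h0
      simpa using this.sub_const 1
    simpa using h2.const_mul E
  filter_upwards [hten.eventually_lt_const hε] with N hN a ha
  rw [Metric.mem_closedBall, dist_zero_right] at ha
  rw [dist_comm, dist_eq_norm]
  -- `∏_{range N} - qPochInf = ∏_{range N} * (1 - qPochInf (a q^N))`
  have hsplit := qp_split hq1 a N
  have key : (∏ i ∈ Finset.range N, (1 - a * q ^ i)) - qPochInf a q
      = (∏ i ∈ Finset.range N, (1 - a * q ^ i)) * (1 - qPochInf (a * q ^ N) q) := by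
    rw [hsplit]; ring
  rw [key, norm_mul]
  have hb1 : ‖∏ i ∈ Finset.range N, (1 - a * q ^ i)‖ ≤ E := by
    have h := QPoch.finprod_sub_one_norm (fun n => -(a * q ^ n)) N
    have e1 : (fun i : ℕ => 1 + -(a * q ^ i)) = fun i => 1 - a * q ^ i := by ext i; ring
    -- direct bound on the product norm via `∏ (1+‖u‖) ≤ exp`
    have h2 : ‖∏ i ∈ Finset.range N, (1 - a * q ^ i)‖
        ≤ ∏ i ∈ Finset.range N, (1 + ‖a * q ^ i‖) := by
      rw [← e1]
      calc ‖∏ i ∈ Finset.range N, (1 + -(a * q ^ i))‖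
          ≤ ∏ i ∈ Finset.range N, ‖1 + -(a * q ^ i)‖ := (norm_prod _ _).le
      _ ≤ ∏ i ∈ Finset.range N, (1 + ‖a * q ^ i‖) := by
          refine Finset.prod_le_prod (fun i _ => norm_nonneg _) (fun i _ => ?_)
          refine (norm_add_le _ _).trans ?_
          simp
    refine h2.trans ((QPoch.finprod_le_exp (fun n => a * q ^ n) N).trans ?_)
    rw [hE]
    refine Real.exp_le_exp.mpr ?_
    have h3 : ∑ i ∈ Finset.range N, ‖a * q ^ i‖ ≤ ∑' i : ℕ, ‖a * q ^ i‖ :=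
      Summable.sum_le_tsum _ (fun i _ => norm_nonneg _) (summable_aq hq1 a)
    rw [qp_tsum_norm hq1 a] at h3
    refine h3.trans ?_
    have : ‖a‖ * (1 - ‖q‖)⁻¹ ≤ R * (1 - ‖q‖)⁻¹ := by
      refine mul_le_mul_of_nonneg_right ha (by positivity)
    linarith
  have hb2 : ‖(1:ℂ) - qPochInf (a * q ^ N) q‖ ≤ Real.exp (R * ‖q‖ ^ N * (1 - ‖q‖)⁻¹) - 1 := by
    rw [norm_sub_rev]
    refine (qp_sub_one_norm hq1 _).trans ?_
    have h4 : ‖a * q ^ N‖ ≤ R * ‖q‖ ^ N := by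
      rw [norm_mul, norm_pow]
      exact mul_le_mul_of_nonneg_right ha (by positivity)
    have : ‖a * q ^ N‖ * (1-‖q‖)⁻¹ ≤ R * ‖q‖ ^ N * (1-‖q‖)⁻¹ :=
      mul_le_mul_of_nonneg_right h4 (by positivity)
    have := Real.exp_le_exp.mpr this
    linarith
  calc ‖∏ i ∈ Finset.range N, (1 - a * q ^ i)‖ * ‖(1:ℂ) - qPochInf (a * q ^ N) q‖
      ≤ E * (Real.exp (R * ‖q‖ ^ N * (1 - ‖q‖)⁻¹) - 1) := by
        have h5 : (0:ℝ) ≤ Real.exp (R * ‖q‖ ^ N * (1-‖q‖)⁻¹) - 1 := by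
          have : (1:ℝ) ≤ Real.exp (R * ‖q‖ ^ N * (1-‖q‖)⁻¹) := by
            have h6 : (0:ℝ) ≤ R * ‖q‖ ^ N * (1-‖q‖)⁻¹ := by positivity
            calc (1:ℝ) = Real.exp 0 := by simp
            _ ≤ _ := Real.exp_le_exp.mpr h6
          linarith
        exact mul_le_mul hb1 hb2 (norm_nonneg _) (le_trans (norm_nonneg _) hb1)
  _ < ε := hN

include hq1 in
lemma qp_differentiable : Differentiable ℂ (fun a : ℂ => qPochInf a q) := by
  intro a0
  have hR : (0:ℝ) < ‖a0‖ + 1 := by positivity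
  have hball : Metric.ball (0:ℂ) (‖a0‖ + 1) ∈ nhds a0 := by
    refine Metric.isOpen_ball.mem_nhds ?_
    rw [Metric.mem_ball, dist_zero_right]; linarith
  have hdiff : DifferentiableOn ℂ (fun a : ℂ => qPochInf a q) (Metric.ball 0 (‖a0‖ + 1)) := by
    refine TendstoLocallyUniformlyOn.differentiableOn
      (((qp_tendstoUniformlyOn hq1 (‖a0‖+1) hR).tendstoLocallyUniformlyOn).mono
        Metric.ball_subset_closedBall) ?_ Metric.isOpen_ball
    filter_upwards with N
    refine DifferentiableOn.fun_finsetProd (u := Finset.range N)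
      (f := fun i (a:ℂ) => 1 - a * q ^ i) fun i _ => ?_
    exact (differentiable_const (1:ℂ)).sub (differentiable_id.mul (differentiable_const _))
      |>.differentiableOn
  exact (hdiff.differentiableAt hball)

include hq1 in
lemma qp_continuous : Continuous (fun a : ℂ => qPochInf a q) :=
  (qp_differentiable hq1).continuous

end Part4

noncomputable def Fcd (w q c d z : ℂ) : ℂ :=
  (qPochInf (-w * z⁻¹) q * qPochInf (-w * z) q * qPochInf q q) /
  (qPochInf (-w * c * z⁻¹) q * qPochInf (-w * d * z) q)

noncomputable def Aint (w q c d : ℂ) : ℂ :=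
  ∫ x in (0:ℝ)..1, Fcd w q c d (Complex.exp (2 * (π:ℂ) * Complex.I * (x:ℂ)))

section Part5
variable {q w c d z : ℂ} (hq1 : ‖q‖ < 1)

lemma one_add_ne_zero_of_norm_lt_one {u : ℂ} (hu : ‖u‖ < 1) : (1:ℂ) + u ≠ 0 := by
  intro h
  have : u = -1 := by linear_combination h
  rw [this] at hu; simp at hu

private lemma div_shift1 {N A B k : ℂ} (hk : k ≠ 0) : N / (k * A * B) * k = N / (A * B) := by
  rw [div_mul_eq_mul_div, show k * A * B = k * (A * B) by ring, show N * k = k * N by ring]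
  exact mul_div_mul_left _ _ hk

private lemma div_shift2 {N A B k : ℂ} (hk : k ≠ 0) : N / (A * (k * B)) * k = N / (A * B) := by
  rw [div_mul_eq_mul_div, show A * (k * B) = k * (A * B) by ring, show N * k = k * N by ring]
  exact mul_div_mul_left _ _ hk

include hq1 in
/-- c-shift: `Fcd (q c) d = Fcd c d * (1 + w c / z)` on the unit circle. -/
lemma Fcd_cshift (hz1 : ‖z‖ = 1) (hwc : ‖w * c‖ < 1) :
    Fcd w q (q * c) d z = Fcd w q c d z * (1 + w * c * z⁻¹) := by
  have hXnorm : ‖w * c * z⁻¹‖ < 1 := by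
    rw [norm_mul, norm_inv, hz1]; simpa using hwc
  have hX : (1:ℂ) + w * c * z⁻¹ ≠ 0 := one_add_ne_zero_of_norm_lt_one hXnorm
  have h1 : qPochInf (-w * c * z⁻¹) q
      = (1 + w * c * z⁻¹) * qPochInf (-w * (q * c) * z⁻¹) q := by
    rw [qp_shift hq1 (-w * c * z⁻¹),
      (show -w * c * z⁻¹ * q = -w * (q * c) * z⁻¹ by ring),
      (show (1:ℂ) - -w * c * z⁻¹ = 1 + w * c * z⁻¹ by ring)]
  rw [Fcd, Fcd, h1]
  exact (div_shift1 hX).symm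

include hq1 in
/-- d-shift: `Fcd c (q d) = Fcd c d * (1 + w d z)` on the unit circle. -/
lemma Fcd_dshift (hz1 : ‖z‖ = 1) (hwd : ‖w * d‖ < 1) :
    Fcd w q c (q * d) z = Fcd w q c d z * (1 + w * d * z) := by
  have hXnorm : ‖w * d * z‖ < 1 := by rw [norm_mul, hz1, mul_one]; exact hwd
  have hX : (1:ℂ) + w * d * z ≠ 0 := one_add_ne_zero_of_norm_lt_one hXnorm
  have h1 : qPochInf (-w * d * z) q
      = (1 + w * d * z) * qPochInf (-w * (q * d) * z) q := by
    rw [qp_shift hq1 (-w * d * z),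
      (show -w * d * z * q = -w * (q * d) * z by ring),
      (show (1:ℂ) - -w * d * z = 1 + w * d * z by ring)]
  rw [Fcd, Fcd, h1]
  exact (div_shift2 hX).symm

include hq1 in
/-- the master pointwise identity `Fcd (qc) d (qz) ⬝ (wz) = Fcd c (qd) z` on the circle. -/
lemma Fcd_master (hz1 : ‖z‖ = 1) (hw2 : w * w = q) (hw0 : w ≠ 0) :
    Fcd w q (q * c) d (q * z) * (w * z) = Fcd w q c (q * d) z := by
  have hz0 : z ≠ 0 := by intro h; rw [h] at hz1; simp at hz1
  have hq0 : q ≠ 0 := by rw [← hw2]; exact mul_ne_zero hw0 hw0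
  -- numerator shifts
  have h3 : qPochInf (-w * (q * z)⁻¹) q
      = (1 + w * (q * z)⁻¹) * qPochInf (-w * z⁻¹) q := by
    have harg : -w * (q * z)⁻¹ * q = -w * z⁻¹ := by
      rw [mul_inv]
      calc -w * (q⁻¹ * z⁻¹) * q = -w * z⁻¹ * (q * q⁻¹) := by ring
      _ = -w * z⁻¹ := by rw [mul_inv_cancel₀ hq0, mul_one]
    rw [qp_shift hq1 (-w * (q * z)⁻¹), harg,
      (show (1:ℂ) - -w * (q * z)⁻¹ = 1 + w * (q * z)⁻¹ by ring)]
  have h4 : qPochInf (-w * z) q = (1 + w * z) * qPochInf (-w * (q * z)) q := by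
    rw [qp_shift hq1 (-w * z),
      (show -w * z * q = -w * (q * z) by ring),
      (show (1:ℂ) - -w * z = 1 + w * z by ring)]
  -- denominator arguments coincide
  have e1 : -w * (q * c) * (q * z)⁻¹ = -w * c * z⁻¹ := by
    rw [mul_inv]
    calc -w * (q * c) * (q⁻¹ * z⁻¹) = -w * c * z⁻¹ * (q * q⁻¹) := by ring
    _ = -w * c * z⁻¹ := by rw [mul_inv_cancel₀ hq0, mul_one]
  have e2 : -w * d * (q * z) = -w * (q * d) * z := by ring
  -- scalar identity
  have hswz : (1 + w * (q * z)⁻¹) * (w * z) = 1 + w * z := by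
    rw [mul_inv]
    calc (1 + w * (q⁻¹ * z⁻¹)) * (w * z)
        = w * z + (w * w) * q⁻¹ * (z * z⁻¹) := by ring
    _ = w * z + q * q⁻¹ := by rw [hw2, mul_inv_cancel₀ hz0, mul_one]
    _ = 1 + w * z := by rw [mul_inv_cancel₀ hq0]; ring
  rw [Fcd, Fcd, e1, e2, h3, h4, div_mul_eq_mul_div]
  congr 1
  calc (1 + w * (q*z)⁻¹) * qPochInf (-w * z⁻¹) q * qPochInf (-w * (q*z)) q * qPochInf q q
        * (w * z)
      = qPochInf (-w * z⁻¹) q * ((1 + w * (q*z)⁻¹) * (w * z)) * qPochInf (-w * (q*z)) q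
        * qPochInf q q := by ring
  _ = qPochInf (-w * z⁻¹) q * ((1 + w * z) * qPochInf (-w * (q*z)) q) * qPochInf q q := by
      rw [hswz]; ring

end Part5

section Part6
open Complex intervalIntegral
variable {q w c d : ℂ} (hq1 : ‖q‖ < 1)

lemma re_two_pi_I_mul (u : ℂ) : (2 * (π:ℂ) * Complex.I * u).re = -(2 * π * u.im) := by
  simp [Complex.mul_re, Complex.mul_im]

lemma norm_exp_two_pi_I_mul (u : ℂ) :
    ‖Complex.exp (2 * (π:ℂ) * Complex.I * u)‖ = Real.exp (-(2 * π * u.im)) := by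
  rw [Complex.norm_exp, re_two_pi_I_mul]

lemma norm_exp_two_pi_I_mul_ofReal (x : ℝ) :
    ‖Complex.exp (2 * (π:ℂ) * Complex.I * (x:ℂ))‖ = 1 := by
  rw [norm_exp_two_pi_I_mul]
  simp

lemma exp_two_pi_I_ne_zero (u : ℂ) : Complex.exp (2 * (π:ℂ) * Complex.I * u) ≠ 0 :=
  Complex.exp_ne_zero _

lemma cont_E : Continuous (fun x : ℝ => Complex.exp (2 * (π:ℂ) * Complex.I * (x:ℂ))) :=
  Complex.continuous_exp.comp (continuous_const.mul Complex.continuous_ofReal)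

include hq1 in
lemma Fcd_cont (hwc : ‖w * c‖ < 1) (hwd : ‖w * d‖ < 1) :
    Continuous (fun x : ℝ => Fcd w q c d (Complex.exp (2 * (π:ℂ) * Complex.I * (x:ℂ)))) := by
  have hE := cont_E
  have hE0 : ∀ x : ℝ, Complex.exp (2 * (π:ℂ) * Complex.I * (x:ℂ)) ≠ 0 :=
    fun x => Complex.exp_ne_zero _
  have hEinv : Continuous (fun x : ℝ =>
      (Complex.exp (2 * (π:ℂ) * Complex.I * (x:ℂ)))⁻¹) := hE.inv₀ hE0
  have hqc := qp_continuous hq1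
  simp only [Fcd]
  refine Continuous.div ?_ ?_ ?_
  · exact ((hqc.comp ((continuous_const.mul hEinv))).mul
      (hqc.comp (continuous_const.mul hE))).mul continuous_const
  · exact (hqc.comp (continuous_const.mul hEinv)).mul (hqc.comp (continuous_const.mul hE))
  · intro x
    refine mul_ne_zero ?_ ?_
    · refine qp_ne_zero_of_norm_lt_one hq1 ?_
      rw [norm_mul, norm_inv, norm_exp_two_pi_I_mul_ofReal, inv_one, mul_one,
        show -w * c = -(w*c) by ring, norm_neg]
      exact hwc
    · refine qp_ne_zero_of_norm_lt_one hq1 ?_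
      rw [norm_mul, norm_exp_two_pi_I_mul_ofReal, mul_one,
        show -w * d = -(w*d) by ring, norm_neg]
      exact hwd

end Part6

section Part7
open Complex intervalIntegral
variable {q w : ℂ}

lemma Aint_strip (τ γ δ : ℂ) (hτ : 0 < τ.im)
    (hq : q = Complex.exp (2 * (π:ℂ) * Complex.I * τ)) (hq1 : ‖q‖ < 1)
    (hγ : ‖w * γ‖ < ‖q‖) (hδ : ‖w * δ‖ < 1) :
    Aint w q γ δ
      = ∫ x in (0:ℝ)..1, Fcd w q γ δ (q * Complex.exp (2 * (π:ℂ) * Complex.I * (x:ℂ))) := by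
  set T := τ.im with hT
  have hq0 : q ≠ 0 := by rw [hq]; exact Complex.exp_ne_zero _
  have hqpos : 0 < ‖q‖ := norm_pos_iff.mpr hq0
  set Φ : ℂ → ℂ := fun u => Fcd w q γ δ (Complex.exp (2 * (π:ℂ) * Complex.I * u)) with hΦ
  have hper : ∀ u : ℂ, Φ (u + 1) = Φ u := by
    intro u
    have hexp : Complex.exp (2 * (π:ℂ) * Complex.I * (u+1))
        = Complex.exp (2 * (π:ℂ) * Complex.I * u) := by
      rw [show 2 * (π:ℂ) * Complex.I * (u+1) = 2 * (π:ℂ) * Complex.I * u + 2 * π * Complex.I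
        by ring, Complex.exp_add, Complex.exp_two_pi_mul_I, mul_one]
    simp only [hΦ, hexp]
  -- global differentiability facts
  have hEg : Differentiable ℂ (fun v : ℂ => Complex.exp (2 * (π:ℂ) * Complex.I * v)) :=
    Complex.differentiable_exp.comp (differentiable_id.const_mul _)
  have hEinvg : Differentiable ℂ (fun v : ℂ => (Complex.exp (2 * (π:ℂ) * Complex.I * v))⁻¹) :=
    fun u => ((hEg u).inv (Complex.exp_ne_zero _))
  have hqpd := qp_differentiable hq1
  -- differentiability on the strip
  have hdiff : DifferentiableOn ℂ Φ (Set.uIcc (0:ℝ) 1 ×ℂ Set.uIcc (0:ℝ) T) := by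
    intro u hu
    rw [Complex.mem_reProdIm] at hu
    have him : 0 ≤ u.im ∧ u.im ≤ T := by
      have h2 := hu.2
      rw [Set.uIcc_of_le hτ.le] at h2
      exact ⟨h2.1, h2.2⟩
    set z : ℂ := Complex.exp (2 * (π:ℂ) * Complex.I * u) with hz
    have hz0 : z ≠ 0 := Complex.exp_ne_zero _
    have hznorm : ‖z‖ = Real.exp (-(2 * π * u.im)) := norm_exp_two_pi_I_mul u
    have hzub : ‖z‖ ≤ 1 := by
      rw [hznorm]
      calc Real.exp (-(2*π*u.im)) ≤ Real.exp 0 := by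
            refine Real.exp_le_exp.mpr ?_
            have h3 : 0 ≤ 2*π*u.im := mul_nonneg (by positivity) him.1
            linarith
      _ = 1 := Real.exp_zero
    have hzlb : ‖q‖ ≤ ‖z‖ := by
      rw [hznorm, hq, norm_exp_two_pi_I_mul]
      refine Real.exp_le_exp.mpr ?_
      have h2 : 2*π*u.im ≤ 2*π*τ.im := by
        have h4 := him.2
        have h5 := Real.pi_pos
        nlinarith
      linarith
    have hd1 : qPochInf (-w * γ * z⁻¹) q ≠ 0 := by
      refine qp_ne_zero_of_norm_lt_one hq1 ?_
      rw [norm_mul, norm_inv, show -w * γ = -(w * γ) by ring, norm_neg]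
      have hzpos : 0 < ‖z‖ := norm_pos_iff.mpr hz0
      have hzinv : ‖z‖⁻¹ ≤ ‖q‖⁻¹ := by
        rw [inv_le_inv₀ hzpos hqpos]
        exact hzlb
      calc ‖w*γ‖ * ‖z‖⁻¹ ≤ ‖w*γ‖ * ‖q‖⁻¹ :=
            mul_le_mul_of_nonneg_left hzinv (norm_nonneg _)
      _ < ‖q‖ * ‖q‖⁻¹ := mul_lt_mul_of_pos_right hγ (by positivity)
      _ = 1 := mul_inv_cancel₀ (ne_of_gt hqpos)
    have hd2 : qPochInf (-w * δ * z) q ≠ 0 := by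
      refine qp_ne_zero_of_norm_lt_one hq1 ?_
      rw [norm_mul, show -w * δ = -(w * δ) by ring, norm_neg]
      calc ‖w*δ‖ * ‖z‖ ≤ ‖w*δ‖ * 1 := mul_le_mul_of_nonneg_left hzub (norm_nonneg _)
      _ < 1 := by simpa using hδ
    refine DifferentiableAt.differentiableWithinAt ?_
    refine DifferentiableAt.div ?_ ?_ (mul_ne_zero hd1 hd2)
    · refine DifferentiableAt.mul (DifferentiableAt.mul ?_ ?_) (differentiableAt_const _)
      · exact ((hqpd.comp (hEinvg.const_mul (-w))) u)
      · exact ((hqpd.comp (hEg.const_mul (-w))) u)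
    · refine DifferentiableAt.mul ?_ ?_
      · exact ((hqpd.comp (hEinvg.const_mul (-w * γ))) u)
      · exact ((hqpd.comp (hEg.const_mul (-w * δ))) u)
  -- rectangle lemma
  have hre : ((1:ℂ) + (T:ℂ) * Complex.I).re = 1 := by simp
  have him2 : ((1:ℂ) + (T:ℂ) * Complex.I).im = T := by simp
  have hrect := Complex.integral_boundary_rect_eq_zero_of_differentiableOn Φ 0
    (1 + (T:ℂ) * Complex.I) (by rw [hre, him2, Complex.zero_re, Complex.zero_im]; exact hdiff)
  rw [hre, him2, Complex.zero_re, Complex.zero_im] at hrect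
  simp only [Complex.ofReal_zero, Complex.ofReal_one, zero_mul, add_zero, zero_add,
    smul_eq_mul] at hrect
  have hvert : (∫ y in (0:ℝ)..T, Φ (1 + (y:ℂ) * Complex.I))
      = ∫ y in (0:ℝ)..T, Φ ((y:ℂ) * Complex.I) := by
    refine intervalIntegral.integral_congr fun y _ => ?_
    rw [show (1:ℂ) + (y:ℂ) * Complex.I = ((y:ℂ) * Complex.I) + 1 by ring, hper]
  rw [hvert] at hrect
  have horiz : (∫ x in (0:ℝ)..1, Φ (x:ℂ))
      = ∫ x in (0:ℝ)..1, Φ ((x:ℂ) + (T:ℂ) * Complex.I) := by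
    linear_combination hrect
  -- now the periodic shift
  have hqe : ∀ x : ℝ, q * Complex.exp (2 * (π:ℂ) * Complex.I * (x:ℂ))
      = Complex.exp (2 * (π:ℂ) * Complex.I * ((x:ℂ) + τ)) := by
    intro x
    rw [hq, ← Complex.exp_add]
    congr 1
    ring
  have hxt : ∀ x : ℝ, ((x:ℂ) + τ) = ((x + τ.re : ℝ) : ℂ) + (T:ℂ) * Complex.I := by
    intro x
    apply Complex.ext <;> simp [hT]
  set ψ : ℝ → ℂ := fun s => Φ ((s:ℂ) + (T:ℂ) * Complex.I) with hψ
  have hψper : Function.Periodic ψ 1 := by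
    intro s
    simp only [hψ]
    push_cast
    rw [show ((s:ℂ) + 1 + (T:ℂ) * Complex.I) = ((s:ℂ) + (T:ℂ) * Complex.I) + 1 by ring, hper]
  have step1 : (∫ x in (0:ℝ)..1, Fcd w q γ δ (q * Complex.exp (2 * (π:ℂ) * Complex.I * (x:ℂ))))
      = ∫ x in (0:ℝ)..1, ψ (x + τ.re) := by
    refine intervalIntegral.integral_congr fun x _ => ?_
    simp only [hψ, hΦ]
    rw [hqe x, hxt x]
  have step2 : (∫ x in (0:ℝ)..1, ψ (x + τ.re)) = ∫ x in (0:ℝ)..1, ψ x := by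
    rw [intervalIntegral.integral_comp_add_right ψ τ.re]
    have := hψper.intervalIntegral_add_eq τ.re 0
    simpa [zero_add, add_comm] using this
  have step3 : Aint w q γ δ = ∫ x in (0:ℝ)..1, Φ (x:ℂ) := by
    simp only [Aint, hΦ]
  rw [step3, horiz, step1, step2]
end Part7

section Part8
open Complex intervalIntegral
variable {q w c d : ℂ}

lemma Aint_rec (τ : ℂ) (hτ : 0 < τ.im)
    (hq : q = Complex.exp (2 * (π:ℂ) * Complex.I * τ)) (hq1 : ‖q‖ < 1)
    (hw2 : w * w = q) (hw0 : w ≠ 0) (hwc : ‖w * c‖ < 1) (hwd : ‖w * d‖ < 1) :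
    Aint w q (q * c) d * (1 - q * c) = Aint w q c d * (1 - q * c * d) := by
  have hq0 : q ≠ 0 := by rw [← hw2]; exact mul_ne_zero hw0 hw0
  have hqpos : 0 < ‖q‖ := norm_pos_iff.mpr hq0
  have hz1 : ∀ x : ℝ, ‖Complex.exp (2 * (π:ℂ) * Complex.I * (x:ℂ))‖ = 1 :=
    norm_exp_two_pi_I_mul_ofReal
  have hE0 : ∀ x : ℝ, Complex.exp (2 * (π:ℂ) * Complex.I * (x:ℂ)) ≠ 0 :=
    fun x => Complex.exp_ne_zero _
  have hEc : Continuous (fun x : ℝ => Complex.exp (2 * (π:ℂ) * Complex.I * (x:ℂ))) := cont_E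
  have hEinv : Continuous (fun x : ℝ =>
      (Complex.exp (2 * (π:ℂ) * Complex.I * (x:ℂ)))⁻¹) := hEc.inv₀ hE0
  have hFc : Continuous (fun x : ℝ =>
      Fcd w q c d (Complex.exp (2 * (π:ℂ) * Complex.I * (x:ℂ)))) := Fcd_cont hq1 hwc hwd
  have hF1c : Continuous (fun x : ℝ =>
      Fcd w q c d (Complex.exp (2 * (π:ℂ) * Complex.I * (x:ℂ))) *
        (Complex.exp (2 * (π:ℂ) * Complex.I * (x:ℂ)))⁻¹) := hFc.mul hEinv
  set A0 : ℂ := Aint w q c d with hA0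
  set A1 : ℂ := ∫ x in (0:ℝ)..1,
      Fcd w q c d (Complex.exp (2 * (π:ℂ) * Complex.I * (x:ℂ))) *
        (Complex.exp (2 * (π:ℂ) * Complex.I * (x:ℂ)))⁻¹ with hA1
  -- first relation: Aint (q c) d = A0 + (w c) A1   (pointwise c-shift)
  have hA'' : Aint w q (q * c) d = A0 + (w * c) * A1 := by
    have hpt : ∀ x : ℝ,
        Fcd w q (q * c) d (Complex.exp (2 * (π:ℂ) * Complex.I * (x:ℂ)))
        = Fcd w q c d (Complex.exp (2 * (π:ℂ) * Complex.I * (x:ℂ)))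
          + (w * c) * (Fcd w q c d (Complex.exp (2 * (π:ℂ) * Complex.I * (x:ℂ))) *
            (Complex.exp (2 * (π:ℂ) * Complex.I * (x:ℂ)))⁻¹) := by
      intro x
      rw [Fcd_cshift hq1 (hz1 x) hwc]
      ring
    rw [Aint, intervalIntegral.integral_congr (g := fun x =>
        Fcd w q c d (Complex.exp (2 * (π:ℂ) * Complex.I * (x:ℂ)))
        + (w * c) * (Fcd w q c d (Complex.exp (2 * (π:ℂ) * Complex.I * (x:ℂ))) *
          (Complex.exp (2 * (π:ℂ) * Complex.I * (x:ℂ)))⁻¹)) (fun x _ => hpt x)]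
    rw [intervalIntegral.integral_add (hFc.intervalIntegrable _ _)
      ((hF1c.intervalIntegrable _ _).const_mul _),
      intervalIntegral.integral_const_mul]
    rfl
  -- second relation via the contour shift:  Aint (q c) d = d A0 + w⁻¹ A1
  have hγ : ‖w * (q * c)‖ < ‖q‖ := by
    rw [show w * (q * c) = q * (w * c) by ring, norm_mul]
    calc ‖q‖ * ‖w * c‖ < ‖q‖ * 1 := mul_lt_mul_of_pos_left hwc hqpos
    _ = ‖q‖ := mul_one _
  have hA' : Aint w q (q * c) d = d * A0 + w⁻¹ * A1 := by
    rw [Aint_strip τ (q * c) d hτ hq hq1 hγ hwd]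
    have hpt : ∀ x : ℝ,
        Fcd w q (q * c) d (q * Complex.exp (2 * (π:ℂ) * Complex.I * (x:ℂ)))
        = d * Fcd w q c d (Complex.exp (2 * (π:ℂ) * Complex.I * (x:ℂ)))
          + w⁻¹ * (Fcd w q c d (Complex.exp (2 * (π:ℂ) * Complex.I * (x:ℂ))) *
            (Complex.exp (2 * (π:ℂ) * Complex.I * (x:ℂ)))⁻¹) := by
      intro x
      set z : ℂ := Complex.exp (2 * (π:ℂ) * Complex.I * (x:ℂ)) with hzdef
      have hz0 : z ≠ 0 := hE0 x
      have h1 := Fcd_master (c := c) (d := d) (z := z) hq1 (hz1 x) hw2 hw0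
      rw [Fcd_dshift hq1 (hz1 x) hwd] at h1
      -- h1 : Fcd (q c) d (q z) * (w z) = Fcd c d z * (1 + w d z)
      have hwE : w * z ≠ 0 := mul_ne_zero hw0 hz0
      apply mul_right_cancel₀ hwE
      rw [h1]
      field_simp
      ring
    rw [intervalIntegral.integral_congr (g := fun x =>
        d * Fcd w q c d (Complex.exp (2 * (π:ℂ) * Complex.I * (x:ℂ)))
        + w⁻¹ * (Fcd w q c d (Complex.exp (2 * (π:ℂ) * Complex.I * (x:ℂ))) *
          (Complex.exp (2 * (π:ℂ) * Complex.I * (x:ℂ)))⁻¹)) (fun x _ => hpt x)]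
    rw [intervalIntegral.integral_add ((hFc.intervalIntegrable _ _).const_mul _)
      ((hF1c.intervalIntegrable _ _).const_mul _),
      intervalIntegral.integral_const_mul, intervalIntegral.integral_const_mul]
    rfl
  have hinv : w * w⁻¹ = 1 := mul_inv_cancel₀ hw0
  linear_combination hA'' - (q*c) * hA' - (A1 * c * w) * hinv + (A1 * c * w⁻¹) * hw2
end Part8

section Part9
open Complex intervalIntegral Filter
variable {q w c d : ℂ}

lemma norm_w_lt_one (hq1 : ‖q‖ < 1) (hw2 : w * w = q) : ‖w‖ < 1 := by
  have h : ‖w‖ * ‖w‖ = ‖q‖ := by rw [← norm_mul, hw2]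
  nlinarith [norm_nonneg w]

/-- `Aint` is continuous in the `c`-parameter along the sequence `q^N c`. -/
lemma Aint_tendsto (hq1 : ‖q‖ < 1) (hw2 : w * w = q) (hw0 : w ≠ 0)
    (hwc : ‖w * c‖ < 1) (hwd : ‖w * d‖ < 1) :
    Tendsto (fun N : ℕ => Aint w q (q ^ N * c) d) atTop (nhds (Aint w q 0 d)) := by
  have h1q : (0:ℝ) < 1 - ‖q‖ := by linarith
  have hwlt : ‖w‖ < 1 := norm_w_lt_one hq1 hw2
  have hz1 : ∀ x : ℝ, ‖Complex.exp (2 * (π:ℂ) * Complex.I * (x:ℂ))‖ = 1 :=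
    norm_exp_two_pi_I_mul_ofReal
  -- uniform lower bound for denominators
  set r : ℝ := max ‖w * c‖ ‖w * d‖ with hr
  have hrlt : r < 1 := max_lt hwc hwd
  have hr0 : 0 ≤ r := le_trans (norm_nonneg _) (le_max_left _ _)
  obtain ⟨δ, hδpos, hδ⟩ := qp_uniform_lb hq1 hrlt hr0
  -- numerator bound
  set C1 : ℝ := Real.exp ((1 - ‖q‖)⁻¹) with hC1
  have hC1pos : 0 < C1 := Real.exp_pos _
  have hnormP : ∀ a : ℂ, ‖a‖ ≤ 1 → ‖qPochInf a q‖ ≤ C1 := by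
    intro a ha
    refine (qp_norm_le hq1 a).trans ?_
    rw [hC1]
    refine Real.exp_le_exp.mpr ?_
    calc ‖a‖ * (1-‖q‖)⁻¹ ≤ 1 * (1-‖q‖)⁻¹ := by
          refine mul_le_mul_of_nonneg_right ha (by positivity)
    _ = (1-‖q‖)⁻¹ := one_mul _
  -- the error sequence
  set ε : ℕ → ℝ := fun N =>
    (C1^3 / (δ * δ)) * (Real.exp (‖w * c‖ * ‖q‖ ^ N * (1 - ‖q‖)⁻¹) - 1) with hε
  have hεt : Tendsto ε atTop (nhds 0) := by
    have h0 : Tendsto (fun N : ℕ => ‖w * c‖ * ‖q‖ ^ N * (1 - ‖q‖)⁻¹) atTop (nhds 0) := by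
      have h := tendsto_pow_atTop_nhds_zero_of_lt_one (norm_nonneg q) hq1
      have := (h.const_mul ‖w * c‖).mul_const ((1 - ‖q‖)⁻¹)
      simpa using this
    have h2 : Tendsto (fun N : ℕ => Real.exp (‖w * c‖ * ‖q‖ ^ N * (1 - ‖q‖)⁻¹) - 1)
        atTop (nhds 0) := by
      have := (Real.continuous_exp.tendsto 0).comp h0
      simpa using this.sub_const 1
    have := h2.const_mul (C1^3 / (δ * δ))
    simpa [hε] using this
  -- the key bound
  have hbound : ∀ N : ℕ, ‖Aint w q (q ^ N * c) d - Aint w q 0 d‖ ≤ ε N := by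
    intro N
    have hwcN : ‖w * (q ^ N * c)‖ ≤ ‖w * c‖ * ‖q‖ ^ N := by
      rw [show w * (q ^ N * c) = (w * c) * q ^ N by ring, norm_mul, norm_pow]
    have hwcN1 : ‖w * (q ^ N * c)‖ < 1 := by
      refine lt_of_le_of_lt hwcN ?_
      calc ‖w * c‖ * ‖q‖ ^ N ≤ ‖w * c‖ * 1 := by
            refine mul_le_mul_of_nonneg_left (pow_le_one₀ (norm_nonneg q) hq1.le) (norm_nonneg _)
      _ < 1 := by simpa using hwc
    have hw0' : ‖w * (0:ℂ)‖ < 1 := by simpa using zero_lt_one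
    have hint1 := (Fcd_cont (c := q ^ N * c) (d := d) hq1 hwcN1 hwd).intervalIntegrable
      (μ := MeasureTheory.volume) 0 1
    have hint2 := (Fcd_cont (c := (0:ℂ)) (d := d) hq1 hw0' hwd).intervalIntegrable
      (μ := MeasureTheory.volume) 0 1
    have hsub : Aint w q (q ^ N * c) d - Aint w q 0 d
        = ∫ x in (0:ℝ)..1,
          (Fcd w q (q ^ N * c) d (Complex.exp (2 * (π:ℂ) * Complex.I * (x:ℂ)))
            - Fcd w q 0 d (Complex.exp (2 * (π:ℂ) * Complex.I * (x:ℂ)))) := by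
      rw [Aint, Aint, ← intervalIntegral.integral_sub hint1 hint2]
    rw [hsub]
    refine (intervalIntegral.norm_integral_le_of_norm_le_const (C := ε N) ?_).trans (by simp)
    intro x _
    set z : ℂ := Complex.exp (2 * (π:ℂ) * Complex.I * (x:ℂ)) with hzdef
    have hz : ‖z‖ = 1 := hz1 x
    have hz0 : z ≠ 0 := Complex.exp_ne_zero _
    -- names for the pieces
    set Num : ℂ := qPochInf (-w * z⁻¹) q * qPochInf (-w * z) q * qPochInf q q with hNum
    set Pc : ℂ := qPochInf (-w * (q ^ N * c) * z⁻¹) q with hPc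
    set Pd : ℂ := qPochInf (-w * d * z) q with hPd
    have hnc : ‖-w * (q ^ N * c) * z⁻¹‖ ≤ r := by
      rw [norm_mul, norm_inv, hz, inv_one, mul_one, show -w * (q ^ N * c) = -(w * (q^N * c))
        by ring, norm_neg]
      refine le_trans hwcN ?_
      calc ‖w * c‖ * ‖q‖ ^ N ≤ ‖w * c‖ * 1 := by
            refine mul_le_mul_of_nonneg_left (pow_le_one₀ (norm_nonneg q) hq1.le) (norm_nonneg _)
      _ = ‖w * c‖ := mul_one _
      _ ≤ r := le_max_left _ _
    have hnd : ‖-w * d * z‖ ≤ r := by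
      rw [norm_mul, hz, mul_one, show -w * d = -(w * d) by ring, norm_neg]
      exact le_max_right _ _
    have hPclb : δ ≤ ‖Pc‖ := hδ _ hnc
    have hPdlb : δ ≤ ‖Pd‖ := hδ _ hnd
    have hPc0 : Pc ≠ 0 := by
      intro h; rw [h] at hPclb; simp at hPclb; linarith
    have hPd0 : Pd ≠ 0 := by
      intro h; rw [h] at hPdlb; simp at hPdlb; linarith
    -- rewrite Fcd at parameter 0
    have hzero : Fcd w q 0 d z = Num / (1 * Pd) := by
      rw [Fcd, show -w * 0 * z⁻¹ = (0:ℂ) by ring, qp_zero]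
    have hcc : Fcd w q (q ^ N * c) d z = Num / (Pc * Pd) := rfl
    have hdiff : Fcd w q (q ^ N * c) d z - Fcd w q 0 d z
        = (Num * (1 - Pc)) / (Pc * Pd) := by
      rw [hcc, hzero]
      field_simp
    rw [hdiff]
    -- now bound the norm
    have hNumb : ‖Num‖ ≤ C1^3 := by
      rw [hNum, norm_mul, norm_mul]
      have b1 : ‖qPochInf (-w * z⁻¹) q‖ ≤ C1 := by
        refine hnormP _ ?_
        rw [norm_mul, norm_inv, hz, inv_one, mul_one, norm_neg]
        exact hwlt.le
      have b2 : ‖qPochInf (-w * z) q‖ ≤ C1 := by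
        refine hnormP _ ?_
        rw [norm_mul, hz, mul_one, norm_neg]
        exact hwlt.le
      have b3 : ‖qPochInf q q‖ ≤ C1 := hnormP _ hq1.le
      calc ‖qPochInf (-w * z⁻¹) q‖ * ‖qPochInf (-w * z) q‖ * ‖qPochInf q q‖
          ≤ C1 * C1 * C1 := by
            refine mul_le_mul (mul_le_mul b1 b2 (norm_nonneg _) hC1pos.le) b3
              (norm_nonneg _) (by positivity)
      _ = C1^3 := by ring
    have hPcb : ‖(1:ℂ) - Pc‖ ≤ Real.exp (‖w * c‖ * ‖q‖ ^ N * (1 - ‖q‖)⁻¹) - 1 := by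
      rw [norm_sub_rev, hPc]
      refine (qp_sub_one_norm hq1 _).trans ?_
      have h5 : ‖-w * (q ^ N * c) * z⁻¹‖ ≤ ‖w * c‖ * ‖q‖ ^ N := by
        rw [norm_mul, norm_inv, hz, inv_one, mul_one,
          show -w * (q ^ N * c) = -(w * (q^N * c)) by ring, norm_neg]
        exact hwcN
      have h6 : ‖-w * (q ^ N * c) * z⁻¹‖ * (1-‖q‖)⁻¹ ≤ ‖w * c‖ * ‖q‖ ^ N * (1-‖q‖)⁻¹ :=
        mul_le_mul_of_nonneg_right h5 (by positivity)
      have := Real.exp_le_exp.mpr h6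
      linarith
    rw [norm_div, norm_mul Num (1 - Pc), norm_mul Pc Pd]
    rw [div_le_iff₀ (mul_pos (lt_of_lt_of_le hδpos hPclb) (lt_of_lt_of_le hδpos hPdlb))]
    have hexp1 : (1:ℝ) ≤ Real.exp (‖w * c‖ * ‖q‖ ^ N * (1 - ‖q‖)⁻¹) := by
      calc (1:ℝ) = Real.exp 0 := by simp
      _ ≤ _ := Real.exp_le_exp.mpr (by positivity)
    calc ‖Num‖ * ‖(1:ℂ) - Pc‖
        ≤ C1^3 * (Real.exp (‖w * c‖ * ‖q‖ ^ N * (1 - ‖q‖)⁻¹) - 1) :=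
          mul_le_mul hNumb hPcb (norm_nonneg _) (by positivity)
    _ = (C1^3 / (δ * δ)) * (Real.exp (‖w * c‖ * ‖q‖ ^ N * (1 - ‖q‖)⁻¹) - 1) * (δ * δ) := by
        field_simp
    _ ≤ ε N * (‖Pc‖ * ‖Pd‖) := by
        have hδδ : δ * δ ≤ ‖Pc‖ * ‖Pd‖ := mul_le_mul hPclb hPdlb hδpos.le (norm_nonneg _)
        have hεnn : 0 ≤ ε N := by
          rw [hε]
          refine mul_nonneg (by positivity) (by linarith)
        calc (C1^3 / (δ * δ)) * (Real.exp (‖w * c‖ * ‖q‖ ^ N * (1 - ‖q‖)⁻¹) - 1) * (δ * δ)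
            = ε N * (δ * δ) := by rw [hε]
        _ ≤ ε N * (‖Pc‖ * ‖Pd‖) := mul_le_mul_of_nonneg_left hδδ hεnn
  have hzero : Tendsto (fun N : ℕ => Aint w q (q ^ N * c) d - Aint w q 0 d) atTop (nhds 0) :=
    squeeze_zero_norm hbound hεt
  have := hzero.add_const (Aint w q 0 d)
  simpa using this

/-- iterating the recursion and passing to the limit. -/
lemma Aint_formula (τ : ℂ) (hτ : 0 < τ.im)
    (hq : q = Complex.exp (2 * (π:ℂ) * Complex.I * τ)) (hq1 : ‖q‖ < 1)
    (hw2 : w * w = q) (hw0 : w ≠ 0) (hwc : ‖w * c‖ < 1) (hwd : ‖w * d‖ < 1) :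
    Aint w q 0 d * qPochInf (q * c) q = Aint w q c d * qPochInf (q * c * d) q := by
  have hind : ∀ N : ℕ, Aint w q (q ^ N * c) d * ∏ k ∈ Finset.range N, (1 - (q*c) * q ^ k)
      = Aint w q c d * ∏ k ∈ Finset.range N, (1 - (q*c*d) * q ^ k) := by
    intro N
    induction N with
    | zero => simp
    | succ n ih =>
      have hwcn : ‖w * (q ^ n * c)‖ < 1 := by
        rw [show w * (q ^ n * c) = (w * c) * q ^ n by ring, norm_mul, norm_pow]
        calc ‖w * c‖ * ‖q‖ ^ n ≤ ‖w * c‖ * 1 := by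
              refine mul_le_mul_of_nonneg_left (pow_le_one₀ (norm_nonneg q) hq1.le)
                (norm_nonneg _)
        _ < 1 := by simpa using hwc
      have hrec := Aint_rec (c := q ^ n * c) (d := d) τ hτ hq hq1 hw2 hw0 hwcn hwd
      rw [show q * (q ^ n * c) = q ^ (n+1) * c by ring] at hrec
      rw [Finset.prod_range_succ, Finset.prod_range_succ]
      linear_combination (∏ k ∈ Finset.range n, (1 - (q*c) * q ^ k)) * hrec
        + (1 - q ^ (n+1) * c * d) * ih
  have t1 : Tendsto (fun N => ∏ k ∈ Finset.range N, (1 - (q*c) * q ^ k)) atTop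
      (nhds (qPochInf (q*c) q)) := (multipliable_qp hq1 (q*c)).hasProd.tendsto_prod_nat
  have t2 : Tendsto (fun N => ∏ k ∈ Finset.range N, (1 - (q*c*d) * q ^ k)) atTop
      (nhds (qPochInf (q*c*d) q)) := (multipliable_qp hq1 (q*c*d)).hasProd.tendsto_prod_nat
  have t3 := Aint_tendsto (c := c) (d := d) hq1 hw2 hw0 hwc hwd
  have T2 : Tendsto (fun N : ℕ => Aint w q (q ^ N * c) d *
      ∏ k ∈ Finset.range N, (1 - (q*c) * q ^ k)) atTop
      (nhds (Aint w q c d * qPochInf (q*c*d) q)) := by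
    refine Tendsto.congr (fun N => (hind N).symm) ?_
    exact tendsto_const_nhds.mul t2
  exact tendsto_nhds_unique (t3.mul t1) T2
end Part9

section Part10
open Complex intervalIntegral
variable {q w c d : ℂ}

lemma Aint_symm (hq1 : ‖q‖ < 1) : Aint w q c d = Aint w q d c := by
  have hptE : ∀ x : ℝ, Complex.exp (2 * (π:ℂ) * Complex.I * ((-x : ℝ) : ℂ))
      = (Complex.exp (2 * (π:ℂ) * Complex.I * (x:ℂ)))⁻¹ := by
    intro x
    rw [← Complex.exp_neg]
    congr 1
    push_cast
    ring
  have hper : Function.Periodic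
      (fun x : ℝ => Fcd w q c d (Complex.exp (2 * (π:ℂ) * Complex.I * (x:ℂ)))) 1 := by
    intro x
    have hexp : Complex.exp (2 * (π:ℂ) * Complex.I * ((x + 1 : ℝ) : ℂ))
        = Complex.exp (2 * (π:ℂ) * Complex.I * (x:ℂ)) := by
      rw [show 2 * (π:ℂ) * Complex.I * ((x + 1 : ℝ) : ℂ)
        = 2 * (π:ℂ) * Complex.I * (x:ℂ) + 2 * π * Complex.I by push_cast; ring,
        Complex.exp_add, Complex.exp_two_pi_mul_I, mul_one]
    simp only [hexp]
  have hpt : ∀ z : ℂ, Fcd w q c d z⁻¹ = Fcd w q d c z := by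
    intro z
    rw [Fcd, Fcd, inv_inv]
    ring
  have h1 : Aint w q d c = ∫ x in (0:ℝ)..1,
      Fcd w q c d ((Complex.exp (2 * (π:ℂ) * Complex.I * (x:ℂ)))⁻¹) := by
    rw [Aint]
    exact intervalIntegral.integral_congr fun x _ => (hpt _).symm
  have h2 : (∫ x in (0:ℝ)..1,
        Fcd w q c d ((Complex.exp (2 * (π:ℂ) * Complex.I * (x:ℂ)))⁻¹))
      = ∫ x in (0:ℝ)..1,
        Fcd w q c d (Complex.exp (2 * (π:ℂ) * Complex.I * ((-x : ℝ) : ℂ))) := by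
    exact intervalIntegral.integral_congr fun x _ => by rw [hptE]
  have h3 : (∫ x in (0:ℝ)..1,
        Fcd w q c d (Complex.exp (2 * (π:ℂ) * Complex.I * ((-x : ℝ) : ℂ))))
      = ∫ x in (-1:ℝ)..0,
        Fcd w q c d (Complex.exp (2 * (π:ℂ) * Complex.I * (x:ℂ))) := by
    have := intervalIntegral.integral_comp_neg
      (fun x : ℝ => Fcd w q c d (Complex.exp (2 * (π:ℂ) * Complex.I * (x:ℂ)))) (a := 0) (b := 1)
    simpa using this
  have h4 : (∫ x in (-1:ℝ)..0,
        Fcd w q c d (Complex.exp (2 * (π:ℂ) * Complex.I * (x:ℂ))))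
      = ∫ x in (0:ℝ)..1,
        Fcd w q c d (Complex.exp (2 * (π:ℂ) * Complex.I * (x:ℂ))) := by
    have := hper.intervalIntegral_add_eq (-1) 0
    simpa using this
  rw [h1, h2, h3, h4, Aint]

lemma Aint_one_one (hq1 : ‖q‖ < 1) (hw2 : w * w = q) : Aint w q 1 1 = qPochInf q q := by
  have hwlt : ‖w‖ < 1 := norm_w_lt_one hq1 hw2
  have hpt : ∀ x : ℝ, Fcd w q 1 1 (Complex.exp (2 * (π:ℂ) * Complex.I * (x:ℂ)))
      = qPochInf q q := by
    intro x
    set z : ℂ := Complex.exp (2 * (π:ℂ) * Complex.I * (x:ℂ)) with hzdef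
    have hz : ‖z‖ = 1 := norm_exp_two_pi_I_mul_ofReal x
    have hA : qPochInf (-w * z⁻¹) q ≠ 0 := by
      refine qp_ne_zero_of_norm_lt_one hq1 ?_
      rw [norm_mul, norm_inv, hz, inv_one, mul_one, norm_neg]
      exact hwlt
    have hB : qPochInf (-w * z) q ≠ 0 := by
      refine qp_ne_zero_of_norm_lt_one hq1 ?_
      rw [norm_mul, hz, mul_one, norm_neg]
      exact hwlt
    rw [Fcd, show -w * 1 * z⁻¹ = -w * z⁻¹ by ring, show -w * 1 * z = -w * z by ring]
    exact mul_div_cancel_left₀ _ (mul_ne_zero hA hB)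
  rw [Aint, intervalIntegral.integral_congr (g := fun _ => qPochInf q q) fun x _ => hpt x]
  simp

end Part10


/-- The trigonometric Ramanujan integral: for `τ ∈ ℍ`, `q = exp(2πiτ)` and
`|c|,|d| < |q|^{-1/2}`, the contour integral over the unit circle
(parametrised by `z = e^{2πix}`, so that `(1/2πi)∮ f(z) dz/z = ∫₀¹ f(e^{2πix}) dx`)
of `(q;q)_∞ (-q^{1/2}z^{-1};q)_∞ (-q^{1/2}z;q)_∞ /
((-q^{1/2}cz^{-1};q)_∞ (-q^{1/2}dz;q)_∞)` equals
`(qc;q)_∞ (qd;q)_∞ / (qcd;q)_∞`. -/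
theorem trigonometric_ramanujan_integral (τ c d : ℂ) (hτ : 0 < τ.im)
    (q : ℂ) (hq : q = Complex.exp (2 * (π : ℂ) * Complex.I * τ))
    (hc : ‖c‖ < ‖q‖ ^ (-(1 / 2) : ℝ)) (hd : ‖d‖ < ‖q‖ ^ (-(1 / 2) : ℝ)) :
    (∫ x in (0 : ℝ)..1,
      (qPochInf (-(Complex.exp ((π : ℂ) * Complex.I * τ)) *
          (Complex.exp (2 * (π : ℂ) * Complex.I * (x : ℂ)))⁻¹) q *
        qPochInf (-(Complex.exp ((π : ℂ) * Complex.I * τ)) *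
          Complex.exp (2 * (π : ℂ) * Complex.I * (x : ℂ))) q *
        qPochInf q q) /
      (qPochInf (-(Complex.exp ((π : ℂ) * Complex.I * τ)) * c *
          (Complex.exp (2 * (π : ℂ) * Complex.I * (x : ℂ)))⁻¹) q *
        qPochInf (-(Complex.exp ((π : ℂ) * Complex.I * τ)) * d *
          Complex.exp (2 * (π : ℂ) * Complex.I * (x : ℂ))) q)) =
    qPochInf (q * c) q * qPochInf (q * d) q / qPochInf (q * c * d) q := by
  set w : ℂ := Complex.exp ((π : ℂ) * Complex.I * τ) with hw
  have hw0 : w ≠ 0 := Complex.exp_ne_zero _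
  have hw2 : w * w = q := by
    rw [hq, hw, ← Complex.exp_add]
    congr 1
    ring
  have hpi := Real.pi_pos
  have hqnorm : ‖q‖ = Real.exp (-(2 * π * τ.im)) := by
    rw [hq]; exact norm_exp_two_pi_I_mul τ
  have hq1 : ‖q‖ < 1 := by
    rw [hqnorm]
    calc Real.exp (-(2 * π * τ.im)) < Real.exp 0 := by
          refine Real.exp_lt_exp.mpr ?_
          nlinarith
    _ = 1 := Real.exp_zero
  have hwnorm : ‖w‖ = Real.exp (-(π * τ.im)) := by
    rw [hw, Complex.norm_exp]
    congr 1
    simp [Complex.mul_re, Complex.mul_im]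
  have hqr : ‖q‖ ^ (-(1 / 2) : ℝ) = Real.exp (π * τ.im) := by
    rw [hqnorm, Real.rpow_def_of_pos (Real.exp_pos _), Real.log_exp]
    congr 1
    ring
  have hwpos : (0:ℝ) < ‖w‖ := by rw [hwnorm]; exact Real.exp_pos _
  have hprod : ‖w‖ * Real.exp (π * τ.im) = 1 := by
    rw [hwnorm, ← Real.exp_add]
    simp
  have hwc : ‖w * c‖ < 1 := by
    rw [norm_mul]
    calc ‖w‖ * ‖c‖ < ‖w‖ * Real.exp (π * τ.im) := by
          refine mul_lt_mul_of_pos_left ?_ hwpos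
          rw [← hqr]; exact hc
    _ = 1 := hprod
  have hwd : ‖w * d‖ < 1 := by
    rw [norm_mul]
    calc ‖w‖ * ‖d‖ < ‖w‖ * Real.exp (π * τ.im) := by
          refine mul_lt_mul_of_pos_left ?_ hwpos
          rw [← hqr]; exact hd
    _ = 1 := hprod
  have hw1 : ‖w * 1‖ < 1 := by
    rw [mul_one]
    have h := norm_w_lt_one hq1 hw2
    exact h
  have hw00 : ‖w * (0:ℂ)‖ < 1 := by simpa using zero_lt_one
  -- the main chain of identities
  have F1 := Aint_formula (c := c) (d := d) τ hτ hq hq1 hw2 hw0 hwc hwd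
  have F2 := Aint_formula (c := d) (d := 0) τ hτ hq hq1 hw2 hw0 hwd hw00
  have F3 := Aint_formula (c := 1) (d := 1) τ hτ hq hq1 hw2 hw0 hw1 hw1
  have F4 := Aint_formula (c := 1) (d := 0) τ hτ hq hq1 hw2 hw0 hw1 hw00
  have hPq : qPochInf q q ≠ 0 := qp_ne_zero_of_norm_lt_one hq1 hq1
  rw [show q * (1:ℂ) * 1 = q by ring, show q * (1:ℂ) = q by ring,
    Aint_one_one hq1 hw2] at F3
  -- F3 : Aint w q 0 1 * qPochInf q q = qPochInf q q * qPochInf q q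
  rw [show q * (1:ℂ) * 0 = (0:ℂ) by ring, show q * (1:ℂ) = q by ring, qp_zero, mul_one] at F4
  -- F4 : Aint w q 0 0 * qPochInf q q = Aint w q 1 0
  rw [show q * d * 0 = (0:ℂ) by ring, qp_zero, mul_one] at F2
  -- F2 : Aint w q 0 0 * qPochInf (q*d) q = Aint w q d 0
  have hsym10 : Aint w q 1 0 = Aint w q 0 1 := Aint_symm hq1
  have hsymd0 : Aint w q d 0 = Aint w q 0 d := Aint_symm hq1
  -- A(0,1) = qPochInf q q
  have hA01 : Aint w q 0 1 = qPochInf q q := mul_right_cancel₀ hPq F3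
  have hA00 : Aint w q 0 0 = 1 := by
    refine mul_right_cancel₀ hPq ?_
    rw [F4, hsym10, hA01, one_mul]
  have hA0d : Aint w q 0 d = qPochInf (q * d) q := by
    rw [← hsymd0, ← F2, hA00, one_mul]
  rw [hA0d] at F1
  -- F1 : qPochInf (q d) q * qPochInf (q c) q = Aint w q c d * qPochInf (q c d) q
  have hqpos : (0:ℝ) < ‖q‖ := by rw [hqnorm]; exact Real.exp_pos _
  have hcX : ‖c‖ < Real.exp (π * τ.im) := by rw [← hqr]; exact hc
  have hdX : ‖d‖ < Real.exp (π * τ.im) := by rw [← hqr]; exact hd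
  have hqX : ‖q‖ * (Real.exp (π * τ.im) * Real.exp (π * τ.im)) = 1 := by
    rw [hqnorm, ← Real.exp_add, ← Real.exp_add]
    rw [show -(2 * π * τ.im) + (π * τ.im + π * τ.im) = 0 by ring, Real.exp_zero]
  have hqcd : ‖q * c * d‖ < 1 := by
    rw [norm_mul, norm_mul]
    have hcd : ‖c‖ * ‖d‖ < Real.exp (π * τ.im) * Real.exp (π * τ.im) :=
      mul_lt_mul'' hcX hdX (norm_nonneg _) (norm_nonneg _)
    calc ‖q‖ * ‖c‖ * ‖d‖ = ‖q‖ * (‖c‖ * ‖d‖) := by ring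
    _ < ‖q‖ * (Real.exp (π * τ.im) * Real.exp (π * τ.im)) :=
        mul_lt_mul_of_pos_left hcd hqpos
    _ = 1 := hqX
  have hPqcd : qPochInf (q * c * d) q ≠ 0 := qp_ne_zero_of_norm_lt_one hq1 hqcd
  have hL : (∫ x in (0 : ℝ)..1,
      (qPochInf (-w * (Complex.exp (2 * (π : ℂ) * Complex.I * (x : ℂ)))⁻¹) q *
        qPochInf (-w * Complex.exp (2 * (π : ℂ) * Complex.I * (x : ℂ))) q *
        qPochInf q q) /
      (qPochInf (-w * c * (Complex.exp (2 * (π : ℂ) * Complex.I * (x : ℂ)))⁻¹) q *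
        qPochInf (-w * d * Complex.exp (2 * (π : ℂ) * Complex.I * (x : ℂ))) q))
      = Aint w q c d := rfl
  rw [hL, eq_div_iff hPqcd]
  linear_combination -F1
end

section
/- (Ramanujan's Gaussian beta integral) Let τ ∈ ℍ, q = exp(2πiτ), and 0 < |a|, |b| < 1. Then ∫_{-∞}^∞ (-a q^{1/2+x}; q)_∞ · (-b q^{1/2-x}; q)_∞ · q^{x²/2} dx = (1/√(-iτ)) · (ab;q)_∞ / ((a;q)_∞ (b;q)_∞). -/
open scoped Real

namespace RGB

open Complex Filter Topology

/-- finite q-Pochhammer `(z;q)_n` -/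
noncomputable def Qp (z q : ℂ) (n : ℕ) : ℂ := ∏ k ∈ Finset.range n, (1 - z * q ^ k)

lemma Qp_succ (z q : ℂ) (n : ℕ) : Qp z q (n + 1) = Qp z q n * (1 - z * q ^ n) :=
  Finset.prod_range_succ _ _

lemma one_sub_ne {w : ℂ} (h : ‖w‖ < 1) : (1 : ℂ) - w ≠ 0 := by
  have : w ≠ 1 := by rintro rfl; simp at h
  exact sub_ne_zero.mpr (Ne.symm this)

lemma norm_zq_lt {q z : ℂ} (hq : ‖q‖ < 1) (hz : ‖z‖ < 1) (k : ℕ) : ‖z * q ^ k‖ < 1 := by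
  rw [norm_mul, norm_pow]
  calc ‖z‖ * ‖q‖ ^ k ≤ ‖z‖ * 1 := by
        exact mul_le_mul_of_nonneg_left (pow_le_one₀ (norm_nonneg q) hq.le) (norm_nonneg z)
    _ < 1 := by rwa [mul_one]

lemma Qp_ne_zero {q z : ℂ} (hq : ‖q‖ < 1) (hz : ‖z‖ < 1) (n : ℕ) : Qp z q n ≠ 0 :=
  Finset.prod_ne_zero_iff.mpr fun k _ => one_sub_ne (norm_zq_lt hq hz k)

lemma Qp_q_ne_zero {q : ℂ} (hq : ‖q‖ < 1) (n : ℕ) : Qp q q n ≠ 0 := by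
  refine Finset.prod_ne_zero_iff.mpr fun k _ => one_sub_ne ?_
  rw [norm_mul, norm_pow, ← pow_succ']
  exact pow_lt_one₀ (norm_nonneg q) hq k.succ_ne_zero

lemma one_sub_q_pow_ne_zero {q : ℂ} (hq : ‖q‖ < 1) (m : ℕ) : (1 : ℂ) - q ^ (m + 1) ≠ 0 :=
  one_sub_ne (by rw [norm_pow]; exact pow_lt_one₀ (norm_nonneg q) hq m.succ_ne_zero)

/-- coefficients of Euler's expansion `∏ (1+zqⁿ) = ∑ eC m zᵐ` -/
noncomputable def eC (q : ℂ) : ℕ → ℂ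
  | 0 => 1
  | m + 1 => eC q m * q ^ m / (1 - q ^ (m + 1))

lemma eC_ne_zero {q : ℂ} (hq0 : q ≠ 0) (hq : ‖q‖ < 1) (m : ℕ) : eC q m ≠ 0 := by
  induction m with
  | zero => simp [eC]
  | succ m ih =>
      exact div_ne_zero (mul_ne_zero ih (pow_ne_zero _ hq0)) (one_sub_q_pow_ne_zero hq m)

/-- the triangular exponent -/
def tri (m : ℕ) : ℕ := ∑ i ∈ Finset.range m, i

lemma tri_succ (m : ℕ) : tri (m + 1) = tri m + m := Finset.sum_range_succ _ _

lemma tri_cast_complex (m : ℕ) : 2 * ((tri m : ℕ) : ℂ) = (m : ℂ) ^ 2 - m := by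
  induction m with
  | zero => simp [tri]
  | succ m ih => rw [tri_succ]; push_cast at ih ⊢; ring_nf; ring_nf at ih; linear_combination ih

lemma tri_cast_real (m : ℕ) : 2 * ((tri m : ℕ) : ℝ) = (m : ℝ) ^ 2 - m := by
  induction m with
  | zero => simp [tri]
  | succ m ih => rw [tri_succ]; push_cast at ih ⊢; ring_nf; ring_nf at ih; linear_combination ih

lemma eC_eq {q : ℂ} (hq : ‖q‖ < 1) (m : ℕ) : eC q m = q ^ (tri m) / Qp q q m := by
  induction m with
  | zero => simp [eC, Qp, tri]
  | succ m ih =>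
      have hQ := Qp_q_ne_zero hq m
      have hf : (1 : ℂ) - q ^ (m + 1) ≠ 0 := one_sub_q_pow_ne_zero hq m
      rw [show eC q (m + 1) = eC q m * q ^ m / (1 - q ^ (m + 1)) from rfl, ih, Qp_succ,
        ← pow_succ', tri_succ, pow_add]
      field_simp
      ring

/-- coefficients of the q-binomial expansion -/
noncomputable def gC (c q : ℂ) (n : ℕ) : ℂ := Qp c q n / Qp q q n

lemma gC_zero (c q : ℂ) : gC c q 0 = 1 := by simp [gC, Qp]

lemma gC_succ (c q : ℂ) (n : ℕ) :
    gC c q (n + 1) = gC c q n * ((1 - c * q ^ n) / (1 - q ^ (n + 1))) := by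
  unfold gC
  rw [Qp_succ, Qp_succ, ← pow_succ', div_mul_div_comm]

lemma gC_ne_zero {c q : ℂ} (hq : ‖q‖ < 1) (hc : ‖c‖ < 1) (n : ℕ) : gC c q n ≠ 0 :=
  div_ne_zero (Qp_ne_zero hq hc n) (Qp_q_ne_zero hq n)

/-- ratio test for positive sequences with explicit ratio -/
lemma summable_of_ratio' {f : ℕ → ℝ} (hf : ∀ n, 0 < f n) {r : ℕ → ℝ} {l : ℝ} (hl : l < 1)
    (hr : ∀ n, f (n + 1) = r n * f n) (hrt : Tendsto r atTop (𝓝 l)) : Summable f := by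
  refine summable_of_ratio_test_tendsto_lt_one hl (Eventually.of_forall fun n => (hf n).ne')
    (hrt.congr fun n => ?_)
  rw [Real.norm_of_nonneg (hf (n + 1)).le, Real.norm_of_nonneg (hf n).le, hr,
    mul_div_cancel_right₀ _ (hf n).ne']

lemma tendsto_one_sub_pow {q w : ℂ} (hq : ‖q‖ < 1) :
    Tendsto (fun n : ℕ => ‖1 - w * q ^ n‖) atTop (𝓝 1) := by
  have t0 : Tendsto (fun n : ℕ => q ^ n) atTop (𝓝 0) :=
    tendsto_pow_atTop_nhds_zero_of_norm_lt_one hq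
  have t1 : Tendsto (fun n : ℕ => (1 : ℂ) - w * q ^ n) atTop (𝓝 1) := by
    have h2 := (tendsto_const_nhds : Tendsto (fun _ : ℕ => (1 : ℂ)) atTop (𝓝 1)).sub
      (t0.const_mul w)
    simpa using h2
  simpa using t1.norm

lemma tendsto_one_sub_qpow_succ {q : ℂ} (hq : ‖q‖ < 1) :
    Tendsto (fun n : ℕ => ‖1 - q ^ (n + 1)‖) atTop (𝓝 1) := by
  have := tendsto_one_sub_pow (q := q) (w := q) hq
  refine this.congr fun n => ?_
  rw [← pow_succ']

lemma summable_norm_eC {q : ℂ} (hq0 : q ≠ 0) (hq : ‖q‖ < 1) {w : ℂ} (hw : w ≠ 0) :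
    Summable fun m => ‖eC q m * w ^ m‖ := by
  have hfpos : ∀ m, 0 < ‖eC q m * w ^ m‖ := fun m =>
    norm_pos_iff.mpr (mul_ne_zero (eC_ne_zero hq0 hq m) (pow_ne_zero _ hw))
  refine summable_of_ratio' hfpos (r := fun m => ‖w‖ * ‖q‖ ^ m / ‖1 - q ^ (m + 1)‖)
    (l := ‖w‖ * 0 / 1) (by simp) (fun m => ?_) ?_
  · have h1 : eC q (m + 1) * w ^ (m + 1) =
        (eC q m * w ^ m) * (w * q ^ m / (1 - q ^ (m + 1))) := by
      rw [show eC q (m + 1) = eC q m * q ^ m / (1 - q ^ (m + 1)) from rfl]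
      ring
    rw [h1, norm_mul, mul_comm]
    congr 1
    simp [norm_div, norm_mul, norm_pow, mul_div_assoc]
  · exact (((tendsto_const_nhds.mul
      (tendsto_pow_atTop_nhds_zero_of_norm_lt_one (by simpa using hq)))).div
      (tendsto_one_sub_qpow_succ hq) one_ne_zero)

lemma summable_norm_gC {c q : ℂ} (hq : ‖q‖ < 1) (hc : ‖c‖ < 1) {z : ℂ} (hz0 : z ≠ 0)
    (hz : ‖z‖ < 1) : Summable fun n => ‖gC c q n * z ^ n‖ := by
  have hfpos : ∀ n, 0 < ‖gC c q n * z ^ n‖ := fun n =>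
    norm_pos_iff.mpr (mul_ne_zero (gC_ne_zero hq hc n) (pow_ne_zero _ hz0))
  refine summable_of_ratio' hfpos (r := fun n => ‖z‖ * ‖1 - c * q ^ n‖ / ‖1 - q ^ (n + 1)‖)
    (l := ‖z‖ * 1 / 1) (by simpa using hz) (fun n => ?_) ?_
  · have h1 : gC c q (n + 1) * z ^ (n + 1) =
        (gC c q n * z ^ n) * (z * ((1 - c * q ^ n) / (1 - q ^ (n + 1)))) := by
      rw [gC_succ]; ring
    rw [h1, norm_mul, mul_comm]
    congr 1
    simp [norm_div, norm_mul, norm_pow, mul_div_assoc]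
  · exact ((tendsto_const_nhds.mul (tendsto_one_sub_pow hq)).div
      (tendsto_one_sub_qpow_succ hq) one_ne_zero)

section core

variable {q : ℂ}

lemma summable_eC (hq0 : q ≠ 0) (hq : ‖q‖ < 1) {w : ℂ} (hw : w ≠ 0) :
    Summable fun m => eC q m * w ^ m := (summable_norm_eC hq0 hq hw).of_norm

lemma summable_gC {c : ℂ} (hq : ‖q‖ < 1) (hc : ‖c‖ < 1) {z : ℂ} (hz0 : z ≠ 0) (hz : ‖z‖ < 1) :
    Summable fun n => gC c q n * z ^ n := (summable_norm_gC hq hc hz0 hz).of_norm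

lemma sumE_funeq (hq0 : q ≠ 0) (hq : ‖q‖ < 1) {z : ℂ} (hz : z ≠ 0) :
    (1 + z) * ∑' m, eC q m * (q * z) ^ m = ∑' m, eC q m * z ^ m := by
  have hqz : q * z ≠ 0 := mul_ne_zero hq0 hz
  have S1 : Summable fun m => eC q m * (q * z) ^ m := summable_eC hq0 hq hqz
  have S2 : Summable fun m => eC q m * z ^ m := summable_eC hq0 hq hz
  have S1t : Summable fun m => eC q (m + 1) * (q * z) ^ (m + 1) :=
    (summable_nat_add_iff (f := fun m => eC q m * (q * z) ^ m) 1).2 S1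
  have S1z : Summable fun m => z * (eC q m * (q * z) ^ m) := S1.mul_left z
  rw [add_mul, one_mul, ← tsum_mul_left (a := z), Summable.tsum_eq_zero_add S1, Summable.tsum_eq_zero_add S2,
    add_assoc, ← Summable.tsum_add S1t S1z]
  congr 1
  refine tsum_congr fun m => ?_
  have h1 : (1 : ℂ) - q ^ (m + 1) ≠ 0 := one_sub_q_pow_ne_zero hq m
  rw [show eC q (m + 1) = eC q m * q ^ m / (1 - q ^ (m + 1)) from rfl]
  field_simp
  ring

lemma sumE_iter (hq0 : q ≠ 0) (hq : ‖q‖ < 1) {z : ℂ} (hz : z ≠ 0) (N : ℕ) :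
    (∏ k ∈ Finset.range N, (1 + z * q ^ k)) * (∑' m, eC q m * (q ^ N * z) ^ m) =
      ∑' m, eC q m * z ^ m := by
  induction N with
  | zero => simp
  | succ N ih =>
      have hne : q ^ N * z ≠ 0 := mul_ne_zero (pow_ne_zero _ hq0) hz
      rw [Finset.prod_range_succ, show q ^ (N + 1) * z = q * (q ^ N * z) by ring, mul_assoc,
        mul_comm z (q ^ N), sumE_funeq hq0 hq hne, ih]

lemma tendsto_tsum_pow_atTop {u : ℕ → ℂ} (hu0 : u 0 = 1)
    (hu : Summable fun m => ‖u m‖ * (1 / 2 : ℝ) ^ m) {w : ℕ → ℂ}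
    (hw : Tendsto w atTop (𝓝 0)) :
    Tendsto (fun N => ∑' m, u m * (w N) ^ m) atTop (𝓝 1) := by
  have hut : Summable fun m => ‖u (m + 1)‖ * (1 / 2 : ℝ) ^ m := by
    refine (((summable_nat_add_iff (f := fun m => ‖u m‖ * (1 / 2 : ℝ) ^ m) 1).2 hu).mul_left
      2).congr fun n => ?_
    ring
  set C := ∑' m, ‖u (m + 1)‖ * (1 / 2 : ℝ) ^ m with hC
  have hev : ∀ᶠ N in atTop, ‖w N‖ ≤ 1 / 2 :=
    (by simpa using hw.norm : Tendsto (fun N => ‖w N‖) atTop (𝓝 0)).eventually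
      (eventually_le_nhds (by norm_num))
  have key : ∀ᶠ N in atTop, ‖(∑' m, u m * (w N) ^ m) - 1‖ ≤ C * ‖w N‖ := by
    filter_upwards [hev] with N hN
    have hle : ∀ m, ‖u m * (w N) ^ m‖ ≤ ‖u m‖ * (1 / 2 : ℝ) ^ m := fun m => by
      rw [norm_mul, norm_pow]
      exact mul_le_mul_of_nonneg_left (pow_le_pow_left₀ (norm_nonneg _) hN m) (norm_nonneg _)
    have hsumn : Summable fun m => ‖u m * (w N) ^ m‖ :=
      Summable.of_nonneg_of_le (fun m => norm_nonneg _) hle hu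
    have hsum : Summable fun m => u m * (w N) ^ m := hsumn.of_norm
    rw [Summable.tsum_eq_zero_add hsum, hu0, pow_zero, mul_one, add_sub_cancel_left]
    have hsumnt : Summable fun m => ‖u (m + 1) * (w N) ^ (m + 1)‖ :=
      (summable_nat_add_iff (f := fun m => ‖u m * (w N) ^ m‖) 1).2 hsumn
    calc ‖∑' m, u (m + 1) * (w N) ^ (m + 1)‖ ≤ ∑' m, ‖u (m + 1) * (w N) ^ (m + 1)‖ :=
          norm_tsum_le_tsum_norm hsumnt
      _ ≤ ∑' m, (‖u (m + 1)‖ * (1 / 2 : ℝ) ^ m) * ‖w N‖ := by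
          refine Summable.tsum_le_tsum (fun m => ?_) hsumnt (hut.mul_right _)
          rw [norm_mul, norm_pow, pow_succ]
          calc ‖u (m + 1)‖ * (‖w N‖ ^ m * ‖w N‖) ≤ ‖u (m + 1)‖ * ((1 / 2 : ℝ) ^ m * ‖w N‖) := by
                refine mul_le_mul_of_nonneg_left (mul_le_mul_of_nonneg_right
                  (pow_le_pow_left₀ (norm_nonneg _) hN m) (norm_nonneg _)) (norm_nonneg _)
            _ = ‖u (m + 1)‖ * (1 / 2 : ℝ) ^ m * ‖w N‖ := by ring
      _ = C * ‖w N‖ := by rw [tsum_mul_right]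
  have h0 : Tendsto (fun N => (∑' m, u m * (w N) ^ m) - 1) atTop (𝓝 0) := by
    refine squeeze_zero_norm' key ?_
    have := (by simpa using hw.norm : Tendsto (fun N => ‖w N‖) atTop (𝓝 0)).const_mul C
    simpa using this
  have := h0.add_const 1
  simpa using this

lemma summable_log_one_add (hq : ‖q‖ < 1) (z : ℂ) :
    Summable fun n => Complex.log (1 + z * q ^ n) := by
  refine Summable.of_norm_bounded_eventually (g := fun n => 3 / 2 * ‖z‖ * ‖q‖ ^ n)
    (((summable_geometric_of_lt_one (norm_nonneg q) hq).mul_left _)) ?_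
  rw [Nat.cofinite_eq_atTop]
  have hev : ∀ᶠ n in atTop, ‖z * q ^ n‖ ≤ 1 / 2 := by
    have h1 : Tendsto (fun n : ℕ => z * q ^ n) atTop (𝓝 0) := by
      simpa using (tendsto_pow_atTop_nhds_zero_of_norm_lt_one hq).const_mul z
    exact (by simpa using h1.norm : Tendsto (fun n : ℕ => ‖z * q ^ n‖) atTop (𝓝 0)).eventually
      (eventually_le_nhds (by norm_num))
  filter_upwards [hev] with n hn
  calc ‖Complex.log (1 + z * q ^ n)‖ ≤ 3 / 2 * ‖z * q ^ n‖ :=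
        Complex.norm_log_one_add_half_le_self hn
    _ = 3 / 2 * ‖z‖ * ‖q‖ ^ n := by rw [norm_mul, norm_pow]; ring

lemma multipliable_one_add (hq : ‖q‖ < 1) (z : ℂ) (h0 : ∀ n, 1 + z * q ^ n ≠ 0) :
    Multipliable fun n => 1 + z * q ^ n :=
  Complex.multipliable_of_summable_log (summable_log_one_add hq z)

lemma tprod_one_add_ne_zero (hq : ‖q‖ < 1) (z : ℂ) (h0 : ∀ n, 1 + z * q ^ n ≠ 0) :
    (∏' n, (1 + z * q ^ n)) ≠ 0 := by
  have h := Complex.cexp_tsum_eq_tprod (f := fun n => 1 + z * q ^ n) h0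
    (summable_log_one_add hq z)
  rw [← h]
  exact Complex.exp_ne_zero _

lemma multipliable_one_sub (hq : ‖q‖ < 1) {z : ℂ} (hz : ‖z‖ < 1) :
    Multipliable fun n => 1 - z * q ^ n := by
  have h0 : ∀ n : ℕ, 1 + (-z) * q ^ n ≠ 0 := fun n => by
    have := one_sub_ne (norm_zq_lt hq hz n)
    rw [neg_mul, ← sub_eq_add_neg]
    exact this
  have := multipliable_one_add hq (-z) h0
  simpa [neg_mul, ← sub_eq_add_neg] using this

lemma tprod_one_sub_ne_zero (hq : ‖q‖ < 1) {z : ℂ} (hz : ‖z‖ < 1) :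
    (∏' n, (1 - z * q ^ n)) ≠ 0 := by
  have h0 : ∀ n : ℕ, 1 + (-z) * q ^ n ≠ 0 := fun n => by
    have := one_sub_ne (norm_zq_lt hq hz n)
    rw [neg_mul, ← sub_eq_add_neg]
    exact this
  have := tprod_one_add_ne_zero hq (-z) h0
  simpa [neg_mul, ← sub_eq_add_neg] using this

lemma summable_norm_eC_half (hq0 : q ≠ 0) (hq : ‖q‖ < 1) :
    Summable fun m => ‖eC q m‖ * (1 / 2 : ℝ) ^ m := by
  refine (summable_norm_eC hq0 hq (w := (1 / 2 : ℂ)) (by norm_num)).congr fun m => ?_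
  rw [norm_mul, norm_pow]
  norm_num

lemma summable_norm_gC_half {c : ℂ} (hq : ‖q‖ < 1) (hc : ‖c‖ < 1) :
    Summable fun n => ‖gC c q n‖ * (1 / 2 : ℝ) ^ n := by
  refine (summable_norm_gC hq hc (z := (1 / 2 : ℂ)) (by norm_num) (by norm_num)).congr
    fun m => ?_
  rw [norm_mul, norm_pow]
  norm_num

theorem hasProd_one_add (hq0 : q ≠ 0) (hq : ‖q‖ < 1) {z : ℂ} (hz : z ≠ 0) :
    HasProd (fun n => 1 + z * q ^ n) (∑' m, eC q m * z ^ m) := by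
  by_cases h0 : ∀ n, 1 + z * q ^ n ≠ 0
  · have hM := multipliable_one_add hq z h0
    suffices hsu : (∏' n, (1 + z * q ^ n)) = ∑' m, eC q m * z ^ m by
      rw [← hsu]; exact hM.hasProd
    have h1 : Tendsto (fun N => ∏ k ∈ Finset.range N, (1 + z * q ^ k)) atTop
        (𝓝 (∏' n, (1 + z * q ^ n))) := hM.hasProd.tendsto_prod_nat
    have h3 : Tendsto (fun N => ∑' m, eC q m * (q ^ N * z) ^ m) atTop (𝓝 1) := by
      refine tendsto_tsum_pow_atTop (by simp [eC]) (summable_norm_eC_half hq0 hq) ?_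
      simpa using (tendsto_pow_atTop_nhds_zero_of_norm_lt_one hq).mul_const z
    have h4 := h1.mul h3
    rw [mul_one] at h4
    have h2 : Tendsto (fun N => (∏ k ∈ Finset.range N, (1 + z * q ^ k)) *
        (∑' m, eC q m * (q ^ N * z) ^ m)) atTop (𝓝 (∑' m, eC q m * z ^ m)) :=
      tendsto_const_nhds.congr fun N => (sumE_iter hq0 hq hz N).symm
    exact tendsto_nhds_unique h4 h2
  · push_neg at h0
    obtain ⟨n₀, hn₀⟩ := h0
    have hS : (∑' m, eC q m * z ^ m) = 0 := by
      have h := sumE_iter hq0 hq hz (n₀ + 1)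
      rw [Finset.prod_eq_zero (Finset.self_mem_range_succ n₀) hn₀, zero_mul] at h
      exact h.symm
    rw [hS]
    have hev : ∀ᶠ s : Finset ℕ in atTop, (∏ i ∈ s, (1 + z * q ^ i)) = 0 := by
      filter_upwards [eventually_ge_atTop ({n₀} : Finset ℕ)] with s hs
      exact Finset.prod_eq_zero (Finset.singleton_subset_iff.mp hs) hn₀
    exact Tendsto.congr' (hev.mono fun s hs => hs.symm) tendsto_const_nhds

lemma sumG_funeq (hq0 : q ≠ 0) (hq : ‖q‖ < 1) {c z : ℂ} (hc : ‖c‖ < 1) (hz0 : z ≠ 0)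
    (hz : ‖z‖ < 1) :
    (1 - z) * ∑' n, gC c q n * z ^ n = (1 - c * z) * ∑' n, gC c q n * (q * z) ^ n := by
  have hqz0 : q * z ≠ 0 := mul_ne_zero hq0 hz0
  have hqz : ‖q * z‖ < 1 := by
    rw [norm_mul]
    calc ‖q‖ * ‖z‖ ≤ 1 * ‖z‖ := mul_le_mul_of_nonneg_right hq.le (norm_nonneg z)
      _ < 1 := by rwa [one_mul]
  have Sz : Summable fun n => gC c q n * z ^ n := summable_gC hq hc hz0 hz
  have Sqz : Summable fun n => gC c q n * (q * z) ^ n := summable_gC hq hc hqz0 hqz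
  have SzA : Summable fun n => gC c q (n + 1) * z ^ (n + 1) :=
    (summable_nat_add_iff (f := fun n => gC c q n * z ^ n) 1).2 Sz
  have SzB : Summable fun n => gC c q n * z ^ (n + 1) :=
    (Sz.mul_left z).congr fun n => by ring
  have SqzA : Summable fun n => gC c q (n + 1) * (q * z) ^ (n + 1) :=
    (summable_nat_add_iff (f := fun n => gC c q n * (q * z) ^ n) 1).2 Sqz
  have SqzB : Summable fun n => c * z * (gC c q n * (q * z) ^ n) := Sqz.mul_left _
  have SzB : Summable fun n => z * (gC c q n * z ^ n) := Sz.mul_left z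
  rw [sub_mul, sub_mul, one_mul, one_mul, ← tsum_mul_left (a := z),
    ← tsum_mul_left (a := c * z), Summable.tsum_eq_zero_add Sz, Summable.tsum_eq_zero_add Sqz,
    add_sub_assoc, add_sub_assoc, ← Summable.tsum_sub SzA SzB, ← Summable.tsum_sub SqzA SqzB]
  congr 1
  refine tsum_congr fun n => ?_
  have h1 : (1 : ℂ) - q ^ (n + 1) ≠ 0 := one_sub_q_pow_ne_zero hq n
  rw [gC_succ]
  field_simp
  ring

lemma sumG_iter (hq0 : q ≠ 0) (hq : ‖q‖ < 1) {c z : ℂ} (hc : ‖c‖ < 1) (hz0 : z ≠ 0)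
    (hz : ‖z‖ < 1) (N : ℕ) :
    Qp z q N * ∑' n, gC c q n * z ^ n =
      Qp (c * z) q N * ∑' n, gC c q n * (q ^ N * z) ^ n := by
  induction N with
  | zero => simp [Qp]
  | succ N ih =>
      have hz0' : q ^ N * z ≠ 0 := mul_ne_zero (pow_ne_zero _ hq0) hz0
      have hz' : ‖q ^ N * z‖ < 1 := by
        rw [norm_mul, norm_pow]
        calc ‖q‖ ^ N * ‖z‖ ≤ 1 * ‖z‖ := by
              exact mul_le_mul_of_nonneg_right (pow_le_one₀ (norm_nonneg q) hq.le) (norm_nonneg z)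
          _ < 1 := by rwa [one_mul]
      have key := sumG_funeq hq0 hq hc hz0' hz'
      rw [Qp_succ, Qp_succ, show (1 : ℂ) - z * q ^ N = 1 - q ^ N * z by ring,
        mul_comm (Qp z q N) (1 - q ^ N * z), mul_assoc, ih, ← mul_assoc,
        mul_comm (1 - q ^ N * z) (Qp (c * z) q N), mul_assoc, key,
        show q * (q ^ N * z) = q ^ (N + 1) * z by ring,
        show (1 : ℂ) - c * (q ^ N * z) = 1 - c * z * q ^ N by ring]
      ring

theorem qbinom (hq0 : q ≠ 0) (hq : ‖q‖ < 1) {c z : ℂ} (hc : ‖c‖ < 1) (hz0 : z ≠ 0)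
    (hz : ‖z‖ < 1) :
    (∑' n, gC c q n * z ^ n) * ∏' n, (1 - z * q ^ n) = ∏' n, (1 - c * z * q ^ n) := by
  have hcz : ‖c * z‖ < 1 := by
    rw [norm_mul]
    calc ‖c‖ * ‖z‖ ≤ 1 * ‖z‖ := mul_le_mul_of_nonneg_right hc.le (norm_nonneg z)
      _ < 1 := by rwa [one_mul]
  have M1 : Multipliable fun n => 1 - z * q ^ n := multipliable_one_sub hq hz
  have M2 : Multipliable fun n => 1 - c * z * q ^ n := multipliable_one_sub hq hcz
  have h1 : Tendsto (fun N => Qp z q N * ∑' n, gC c q n * z ^ n) atTop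
      (𝓝 ((∏' n, (1 - z * q ^ n)) * ∑' n, gC c q n * z ^ n)) :=
    M1.hasProd.tendsto_prod_nat.mul_const _
  have h3 : Tendsto (fun N => ∑' n, gC c q n * (q ^ N * z) ^ n) atTop (𝓝 1) := by
    refine tendsto_tsum_pow_atTop (gC_zero c q) (summable_norm_gC_half hq hc) ?_
    simpa using (tendsto_pow_atTop_nhds_zero_of_norm_lt_one hq).mul_const z
  have h2 : Tendsto (fun N => Qp (c * z) q N * ∑' n, gC c q n * (q ^ N * z) ^ n) atTop
      (𝓝 ((∏' n, (1 - c * z * q ^ n)) * 1)) := M2.hasProd.tendsto_prod_nat.mul h3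
  have h4 : Tendsto (fun N => Qp z q N * ∑' n, gC c q n * z ^ n) atTop
      (𝓝 ((∏' n, (1 - c * z * q ^ n)) * 1)) :=
    h2.congr fun N => (sumG_iter hq0 hq hc hz0 hz N).symm
  have h5 := tendsto_nhds_unique h1 h4
  rw [mul_one] at h5
  rw [mul_comm]
  exact h5

lemma tprod_shift (hq : ‖q‖ < 1) {z : ℂ} (hz : ‖z‖ < 1) (m : ℕ) :
    (∏' n, (1 - z * q ^ m * q ^ n)) * Qp z q m = ∏' n, (1 - z * q ^ n) := by
  have hzm : ‖z * q ^ m‖ < 1 := by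
    rw [norm_mul, norm_pow]
    calc ‖z‖ * ‖q‖ ^ m ≤ ‖z‖ * 1 :=
          mul_le_mul_of_nonneg_left (pow_le_one₀ (norm_nonneg q) hq.le) (norm_nonneg z)
      _ < 1 := by rwa [mul_one]
  have hM : Multipliable fun n => 1 - z * q ^ (n + m) := by
    refine (multipliable_one_sub hq hzm).congr fun n => ?_
    rw [pow_add]
    ring
  have h := Multipliable.prod_mul_tprod_nat_mul' (f := fun n => 1 - z * q ^ n) (k := m) hM
  have h2 : (∏' n, (1 - z * q ^ (n + m))) = ∏' n, (1 - z * q ^ m * q ^ n) :=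
    tprod_congr fun n => by rw [pow_add]; ring
  rw [h2] at h
  rw [mul_comm]
  exact h

end core

section gaussian

open MeasureTheory

lemma norm_cexp (w : ℂ) : ‖Complex.exp w‖ = Real.exp w.re := by
  rw [Complex.norm_exp]

lemma integral_rexp_quad {β : ℝ} (hβ : 0 < β) (γ : ℝ) :
    ∫ x : ℝ, Real.exp (-β * x ^ 2 + γ * x) =
      Real.exp (γ ^ 2 / (4 * β)) * Real.sqrt (π / β) := by
  have hb : (-(β : ℂ)).re < 0 := by simpa using hβ
  have h := integral_cexp_quadratic hb (γ : ℂ) 0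
  have hL : (∫ x : ℝ, Complex.exp (-(β : ℂ) * (x : ℂ) ^ 2 + (γ : ℂ) * (x : ℂ) + 0)) =
      ((∫ x : ℝ, Real.exp (-β * x ^ 2 + γ * x) : ℝ) : ℂ) := by
    calc (∫ x : ℝ, Complex.exp (-(β : ℂ) * (x : ℂ) ^ 2 + (γ : ℂ) * (x : ℂ) + 0))
        = ∫ x : ℝ, ((Real.exp (-β * x ^ 2 + γ * x) : ℝ) : ℂ) := by
          refine integral_congr_ae (Filter.Eventually.of_forall fun x => ?_)
          show Complex.exp (-(β : ℂ) * (x : ℂ) ^ 2 + (γ : ℂ) * (x : ℂ) + 0) =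
            ((Real.exp (-β * x ^ 2 + γ * x) : ℝ) : ℂ)
          rw [Complex.ofReal_exp]
          congr 1
          push_cast
          ring
      _ = ((∫ x : ℝ, Real.exp (-β * x ^ 2 + γ * x) : ℝ) : ℂ) := integral_ofReal
  rw [hL] at h
  have hR : ((π : ℂ) / -(-(β : ℂ))) ^ (1 / 2 : ℂ) * Complex.exp (0 - (γ : ℂ) ^ 2 / (4 * -(β : ℂ)))
      = ((Real.exp (γ ^ 2 / (4 * β)) * Real.sqrt (π / β) : ℝ) : ℂ) := by
    rw [neg_neg]
    have h1 : ((π : ℂ) / (β : ℂ)) = ((π / β : ℝ) : ℂ) := by push_cast; ring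
    have h2 : (0 - (γ : ℂ) ^ 2 / (4 * -(β : ℂ))) = ((γ ^ 2 / (4 * β) : ℝ) : ℂ) := by
      push_cast
      field_simp
      ring
    rw [h1, show (1 / 2 : ℂ) = ((1 / 2 : ℝ) : ℂ) by norm_num,
      ← Complex.ofReal_cpow (by positivity) (1 / 2 : ℝ), h2, ← Complex.ofReal_exp,
      ← Complex.ofReal_mul, Real.sqrt_eq_rpow]
    push_cast
    ring
  rw [hR] at h
  exact_mod_cast h

lemma integrable_rexp_quad {β : ℝ} (hβ : 0 < β) (γ : ℝ) :
    Integrable fun x : ℝ => Real.exp (-β * x ^ 2 + γ * x) := by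
  have h := (integrable_cexp_quadratic' (b := -(β : ℂ)) (by simpa using hβ) (γ : ℂ) 0).norm
  refine h.congr (Filter.Eventually.of_forall fun x => ?_)
  show ‖Complex.exp (-(β : ℂ) * (x : ℂ) ^ 2 + (γ : ℂ) * (x : ℂ) + 0)‖ = _
  rw [show -(β : ℂ) * (x : ℂ) ^ 2 + (γ : ℂ) * (x : ℂ) + 0 = ((-β * x ^ 2 + γ * x : ℝ) : ℂ) by
    push_cast; ring, ← Complex.ofReal_exp, Complex.norm_real,
    Real.norm_of_nonneg (Real.exp_nonneg _)]

end gaussian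

section mainlemmas

open MeasureTheory

/-- the double-series term whose sum is the integrand -/
noncomputable def Tf (τ a b q : ℂ) (p : ℕ × ℕ) (x : ℝ) : ℂ :=
  (eC q p.1 * eC q p.2 * a ^ p.1 * b ^ p.2 *
    Complex.exp ((π : ℂ) * Complex.I * τ * ((p.1 : ℂ) + (p.2 : ℂ)))) *
  Complex.exp ((π : ℂ) * Complex.I * τ * (x : ℂ) ^ 2 +
    (2 * (π : ℂ) * Complex.I * τ * ((p.1 : ℂ) - (p.2 : ℂ))) * (x : ℂ) + 0)

variable {τ a b q : ℂ}

lemma re_I_mul (τ : ℂ) : (Complex.I * τ).re = -τ.im := by simp [Complex.mul_re]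

lemma re_piIt (τ : ℂ) : ((π : ℂ) * Complex.I * τ).re = -(π * τ.im) := by
  have h1 : (π : ℂ) * Complex.I * τ = ((π : ℝ) : ℂ) * (Complex.I * τ) := by ring
  rw [h1, Complex.re_ofReal_mul, re_I_mul]
  ring

lemma re_2piIt (τ : ℂ) : (2 * (π : ℂ) * Complex.I * τ).re = -(2 * π * τ.im) := by
  have h1 : 2 * (π : ℂ) * Complex.I * τ = ((2 * π : ℝ) : ℂ) * (Complex.I * τ) := by
    push_cast; ring
  rw [h1, Complex.re_ofReal_mul, re_I_mul]
  ring

lemma re_piIt_neg (hτ : 0 < τ.im) : ((π : ℂ) * Complex.I * τ).re < 0 := by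
  rw [re_piIt]
  nlinarith [Real.pi_pos]

lemma norm_q_eq (hq : q = Complex.exp (2 * (π : ℂ) * Complex.I * τ)) :
    ‖q‖ = Real.exp (-(2 * π * τ.im)) := by
  rw [hq, norm_cexp, re_2piIt]

lemma norm_q_lt_one (hτ : 0 < τ.im) (hq : q = Complex.exp (2 * (π : ℂ) * Complex.I * τ)) :
    ‖q‖ < 1 := by
  rw [norm_q_eq hq]
  apply Real.exp_lt_one_iff.mpr
  nlinarith [Real.pi_pos]

lemma q_pow_eq (hq : q = Complex.exp (2 * (π : ℂ) * Complex.I * τ)) (k : ℕ) :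
    q ^ k = Complex.exp (2 * (π : ℂ) * Complex.I * τ * (k : ℂ)) := by
  rw [hq, ← Complex.exp_nat_mul]
  congr 1
  ring

lemma Tf_integrable (hτ : 0 < τ.im) (p : ℕ × ℕ) : Integrable (Tf τ a b q p) :=
  (integrable_cexp_quadratic' (re_piIt_neg hτ) _ _).const_mul _

lemma piIt_ne_zero (hτ : 0 < τ.im) : (π : ℂ) * Complex.I * τ ≠ 0 := by
  intro h
  have := re_piIt_neg hτ
  rw [h] at this
  simp at this

lemma Tf_integral (hτ : 0 < τ.im) (hq : q = Complex.exp (2 * (π : ℂ) * Complex.I * τ))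
    (p : ℕ × ℕ) :
    ∫ x : ℝ, Tf τ a b q p x = ((π : ℂ) / -((π : ℂ) * Complex.I * τ)) ^ (1 / 2 : ℂ) *
      (a ^ p.1 * b ^ p.2 * q ^ (p.1 * p.2) / (Qp q q p.1 * Qp q q p.2)) := by
  have hqn : ‖q‖ < 1 := norm_q_lt_one hτ hq
  have hb := re_piIt_neg hτ
  unfold Tf
  rw [integral_const_mul, integral_cexp_quadratic hb]
  have hπιτ : (π : ℂ) * Complex.I * τ ≠ 0 := piIt_ne_zero hτ
  have hc2 : (0 : ℂ) - (2 * (π : ℂ) * Complex.I * τ * ((p.1 : ℂ) - (p.2 : ℂ))) ^ 2 /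
      (4 * ((π : ℂ) * Complex.I * τ)) =
      -((π : ℂ) * Complex.I * τ * ((p.1 : ℂ) - (p.2 : ℂ)) ^ 2) := by
    field_simp
    ring
  rw [hc2, eC_eq hqn, eC_eq hqn, q_pow_eq hq (tri p.1), q_pow_eq hq (tri p.2),
    q_pow_eq hq (p.1 * p.2)]
  have hexp : Complex.exp (2 * (π : ℂ) * Complex.I * τ * ((tri p.1 : ℕ) : ℂ)) *
      Complex.exp (2 * (π : ℂ) * Complex.I * τ * ((tri p.2 : ℕ) : ℂ)) *
      Complex.exp ((π : ℂ) * Complex.I * τ * ((p.1 : ℂ) + (p.2 : ℂ))) *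
      Complex.exp (-((π : ℂ) * Complex.I * τ * ((p.1 : ℂ) - (p.2 : ℂ)) ^ 2)) =
      Complex.exp (2 * (π : ℂ) * Complex.I * τ * ((p.1 * p.2 : ℕ) : ℂ)) := by
    rw [← Complex.exp_add, ← Complex.exp_add, ← Complex.exp_add]
    congr 1
    have t1 := tri_cast_complex p.1
    have t2 := tri_cast_complex p.2
    push_cast at t1 t2 ⊢
    linear_combination ((π : ℂ) * Complex.I * τ) * t1 + ((π : ℂ) * Complex.I * τ) * t2
  rw [← hexp]
  ring

lemma summable_pow_div_Qp (hq : ‖q‖ < 1) {c : ℂ} (hc0 : c ≠ 0) (hc : ‖c‖ < 1) :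
    Summable fun m => ‖c‖ ^ m / ‖Qp q q m‖ := by
  have hQ : ∀ m, (0 : ℝ) < ‖Qp q q m‖ := fun m => norm_pos_iff.mpr (Qp_q_ne_zero hq m)
  have hc' : (0 : ℝ) < ‖c‖ := norm_pos_iff.mpr hc0
  refine summable_of_ratio' (fun m => div_pos (pow_pos hc' m) (hQ m))
    (r := fun m => ‖c‖ / ‖1 - q ^ (m + 1)‖) (l := ‖c‖ / 1) (by simpa using hc) (fun m => ?_) ?_
  · rw [show Qp q q (m + 1) = Qp q q m * (1 - q ^ (m + 1)) by rw [Qp_succ, ← pow_succ'],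
      norm_mul, pow_succ]
    field_simp
  · exact tendsto_const_nhds.div (tendsto_one_sub_qpow_succ hq) one_ne_zero

lemma Tf_norm_integral (hτ : 0 < τ.im) (hq : q = Complex.exp (2 * (π : ℂ) * Complex.I * τ))
    (m n : ℕ) :
    ∫ x : ℝ, ‖Tf τ a b q (m, n) x‖ = Real.sqrt (π / (π * τ.im)) *
      (‖a‖ ^ m * ‖b‖ ^ n * ‖q‖ ^ (m * n) / (‖Qp q q m‖ * ‖Qp q q n‖)) := by
  have hqn : ‖q‖ < 1 := norm_q_lt_one hτ hq
  set β : ℝ := π * τ.im with hβdef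
  have hβ : 0 < β := by positivity
  set k : ℝ := (m : ℝ) - (n : ℝ) with hkdef
  set γ : ℝ := -(2 * β * k) with hγdef
  have harg : ∀ x : ℝ, (π : ℂ) * Complex.I * τ * (x : ℂ) ^ 2 +
      (2 * (π : ℂ) * Complex.I * τ * ((m : ℂ) - (n : ℂ))) * (x : ℂ) + 0 =
      ((x ^ 2 + 2 * k * x : ℝ) : ℂ) * ((π : ℂ) * Complex.I * τ) := by
    intro x
    rw [hkdef]
    push_cast
    ring
  have hptw : ∀ x : ℝ, ‖Tf τ a b q (m, n) x‖ =
      ‖eC q m * eC q n * a ^ m * b ^ n *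
        Complex.exp ((π : ℂ) * Complex.I * τ * ((m : ℂ) + (n : ℂ)))‖ *
      Real.exp (-β * x ^ 2 + γ * x) := by
    intro x
    rw [Tf, norm_mul, norm_cexp, harg x, Complex.re_ofReal_mul, re_piIt]
    congr 2
    rw [hγdef, hβdef]
    ring
  rw [integral_congr_ae (Filter.Eventually.of_forall hptw), integral_const_mul,
    integral_rexp_quad hβ]
  have hγβ : γ ^ 2 / (4 * β) = β * k ^ 2 := by
    rw [hγdef]
    field_simp
    ring
  have hκ : ‖eC q m * eC q n * a ^ m * b ^ n *
      Complex.exp ((π : ℂ) * Complex.I * τ * ((m : ℂ) + (n : ℂ)))‖ =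
      ‖q‖ ^ tri m / ‖Qp q q m‖ * (‖q‖ ^ tri n / ‖Qp q q n‖) * ‖a‖ ^ m * ‖b‖ ^ n *
        Real.exp (((m : ℝ) + (n : ℝ)) * (-β)) := by
    rw [eC_eq hqn, eC_eq hqn]
    have h1 : (π : ℂ) * Complex.I * τ * ((m : ℂ) + (n : ℂ)) =
        (((m : ℝ) + (n : ℝ) : ℝ) : ℂ) * ((π : ℂ) * Complex.I * τ) := by push_cast; ring
    simp only [norm_mul, norm_div, norm_pow]
    rw [norm_cexp, h1, Complex.re_ofReal_mul, re_piIt, ← hβdef]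
  rw [hκ, hγβ]
  have hqexp : ‖q‖ ^ tri m * ‖q‖ ^ tri n * Real.exp (((m : ℝ) + (n : ℝ)) * (-β)) *
      Real.exp (β * k ^ 2) = ‖q‖ ^ (m * n) := by
    rw [norm_q_eq hq, ← Real.exp_nat_mul, ← Real.exp_nat_mul, ← Real.exp_nat_mul,
      ← Real.exp_add, ← Real.exp_add, ← Real.exp_add]
    congr 1
    have t1 := tri_cast_real m
    have t2 := tri_cast_real n
    rw [hkdef, hβdef]
    push_cast at t1 t2 ⊢
    linear_combination (-(π * τ.im)) * t1 + (-(π * τ.im)) * t2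
  rw [← hqexp]
  ring

end mainlemmas

end RGB

set_option maxHeartbeats 1000000 in
open MeasureTheory in
/-- Ramanujan's Gaussian beta integral: for `τ ∈ ℍ`, `q = exp(2πiτ)` and
`0 < |a|,|b| < 1`,
`∫_{-∞}^∞ (-aq^{1/2+x};q)_∞ (-bq^{1/2-x};q)_∞ q^{x²/2} dx
= (1/√(-iτ)) (ab;q)_∞ / ((a;q)_∞ (b;q)_∞)`. -/
theorem ramanujan_gaussian_beta_integral (τ a b : ℂ) (hτ : 0 < τ.im)
    (q : ℂ) (hq : q = Complex.exp (2 * (π : ℂ) * Complex.I * τ))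
    (ha0 : a ≠ 0) (hb0 : b ≠ 0) (ha : ‖a‖ < 1) (hb : ‖b‖ < 1) :
    (∫ x : ℝ,
      qPochInf (-a * Complex.exp (2 * (π : ℂ) * Complex.I * τ * (1 / 2 + (x : ℂ)))) q *
      qPochInf (-b * Complex.exp (2 * (π : ℂ) * Complex.I * τ * (1 / 2 - (x : ℂ)))) q *
      Complex.exp ((π : ℂ) * Complex.I * τ * (x : ℂ) ^ 2)) =
    ((-Complex.I * τ) ^ (1 / 2 : ℂ))⁻¹ *
      (qPochInf (a * b) q / (qPochInf a q * qPochInf b q)) := by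
  have hqn : ‖q‖ < 1 := RGB.norm_q_lt_one hτ hq
  have hq0 : q ≠ 0 := by rw [hq]; exact Complex.exp_ne_zero _
  -- Step 1: pointwise expansion of the integrand into the double series
  have hpt : ∀ x : ℝ,
      qPochInf (-a * Complex.exp (2 * (π : ℂ) * Complex.I * τ * (1 / 2 + (x : ℂ)))) q *
      qPochInf (-b * Complex.exp (2 * (π : ℂ) * Complex.I * τ * (1 / 2 - (x : ℂ)))) q *
      Complex.exp ((π : ℂ) * Complex.I * τ * (x : ℂ) ^ 2) =
      ∑' p : ℕ × ℕ, RGB.Tf τ a b q p x := by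
    intro x
    have hA0 : a * Complex.exp (2 * (π : ℂ) * Complex.I * τ * (1 / 2 + (x : ℂ))) ≠ 0 :=
      mul_ne_zero ha0 (Complex.exp_ne_zero _)
    have hB0 : b * Complex.exp (2 * (π : ℂ) * Complex.I * τ * (1 / 2 - (x : ℂ))) ≠ 0 :=
      mul_ne_zero hb0 (Complex.exp_ne_zero _)
    have h1 : qPochInf (-a * Complex.exp (2 * (π : ℂ) * Complex.I * τ * (1 / 2 + (x : ℂ)))) q =
        ∑' m, RGB.eC q m *
          (a * Complex.exp (2 * (π : ℂ) * Complex.I * τ * (1 / 2 + (x : ℂ)))) ^ m := by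
      rw [qPochInf, ← (RGB.hasProd_one_add hq0 hqn hA0).tprod_eq]
      exact tprod_congr fun n => by ring
    have h2 : qPochInf (-b * Complex.exp (2 * (π : ℂ) * Complex.I * τ * (1 / 2 - (x : ℂ)))) q =
        ∑' n, RGB.eC q n *
          (b * Complex.exp (2 * (π : ℂ) * Complex.I * τ * (1 / 2 - (x : ℂ)))) ^ n := by
      rw [qPochInf, ← (RGB.hasProd_one_add hq0 hqn hB0).tprod_eq]
      exact tprod_congr fun n => by ring
    rw [h1, h2, tsum_mul_tsum_of_summable_norm (RGB.summable_norm_eC hq0 hqn hA0)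
      (RGB.summable_norm_eC hq0 hqn hB0), ← tsum_mul_right]
    refine tsum_congr fun p => ?_
    obtain ⟨m, n⟩ := p
    show (RGB.eC q m * (a * Complex.exp (2 * (π : ℂ) * Complex.I * τ * (1 / 2 + (x : ℂ)))) ^ m) *
      (RGB.eC q n * (b * Complex.exp (2 * (π : ℂ) * Complex.I * τ * (1 / 2 - (x : ℂ)))) ^ n) *
      Complex.exp ((π : ℂ) * Complex.I * τ * (x : ℂ) ^ 2) = RGB.Tf τ a b q (m, n) x
    rw [RGB.Tf, mul_pow, mul_pow, ← Complex.exp_nat_mul, ← Complex.exp_nat_mul]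
    have hmerge : Complex.exp ((m : ℂ) * (2 * (π : ℂ) * Complex.I * τ * (1 / 2 + (x : ℂ)))) *
        Complex.exp ((n : ℂ) * (2 * (π : ℂ) * Complex.I * τ * (1 / 2 - (x : ℂ)))) *
        Complex.exp ((π : ℂ) * Complex.I * τ * (x : ℂ) ^ 2) =
        Complex.exp ((π : ℂ) * Complex.I * τ * ((m : ℂ) + (n : ℂ))) *
        Complex.exp ((π : ℂ) * Complex.I * τ * (x : ℂ) ^ 2 +
          (2 * (π : ℂ) * Complex.I * τ * ((m : ℂ) - (n : ℂ))) * (x : ℂ) + 0) := by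
      rw [← Complex.exp_add, ← Complex.exp_add, ← Complex.exp_add]
      congr 1
      ring
    linear_combination (RGB.eC q m * RGB.eC q n * a ^ m * b ^ n) * hmerge
  -- Step 2: summability of the integrals of norms
  have hu : Summable fun m : ℕ => ‖a‖ ^ m / ‖RGB.Qp q q m‖ :=
    RGB.summable_pow_div_Qp hqn ha0 ha
  have hv : Summable fun n : ℕ => ‖b‖ ^ n / ‖RGB.Qp q q n‖ :=
    RGB.summable_pow_div_Qp hqn hb0 hb
  have huv : Summable fun p : ℕ × ℕ =>
      (‖a‖ ^ p.1 / ‖RGB.Qp q q p.1‖) * (‖b‖ ^ p.2 / ‖RGB.Qp q q p.2‖) := by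
    exact summable_mul_of_summable_norm (R := ℝ)
      (hu.abs.congr fun m => (Real.norm_eq_abs _).symm)
      (hv.abs.congr fun n => (Real.norm_eq_abs _).symm)
  have hbound : ∀ p : ℕ × ℕ,
      ‖a‖ ^ p.1 * ‖b‖ ^ p.2 * ‖q‖ ^ (p.1 * p.2) / (‖RGB.Qp q q p.1‖ * ‖RGB.Qp q q p.2‖) ≤
      (‖a‖ ^ p.1 / ‖RGB.Qp q q p.1‖) * (‖b‖ ^ p.2 / ‖RGB.Qp q q p.2‖) := by
    intro p
    have hQm : (0 : ℝ) < ‖RGB.Qp q q p.1‖ := norm_pos_iff.mpr (RGB.Qp_q_ne_zero hqn p.1)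
    have hQn : (0 : ℝ) < ‖RGB.Qp q q p.2‖ := norm_pos_iff.mpr (RGB.Qp_q_ne_zero hqn p.2)
    calc ‖a‖ ^ p.1 * ‖b‖ ^ p.2 * ‖q‖ ^ (p.1 * p.2) / (‖RGB.Qp q q p.1‖ * ‖RGB.Qp q q p.2‖)
        ≤ ‖a‖ ^ p.1 * ‖b‖ ^ p.2 * 1 / (‖RGB.Qp q q p.1‖ * ‖RGB.Qp q q p.2‖) := by
          gcongr
          exact pow_le_one₀ (norm_nonneg q) hqn.le
      _ = _ := by rw [mul_one, ← div_mul_div_comm]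
  have hsumnorm : Summable fun p : ℕ × ℕ => ∫ x : ℝ, ‖RGB.Tf τ a b q p x‖ := by
    refine Summable.congr ?_ (fun p => (RGB.Tf_norm_integral hτ hq p.1 p.2).symm)
    refine Summable.mul_left _ ?_
    refine Summable.of_nonneg_of_le (fun p => by positivity) hbound huv
  -- Step 3: swap integral and sum
  have hTint : ∀ p : ℕ × ℕ, Integrable (RGB.Tf τ a b q p) := RGB.Tf_integrable hτ
  have hswap := integral_tsum_of_summable_integral_norm hTint hsumnorm
  -- Step 4: the q-series identity
  have hW : (∑' p : ℕ × ℕ, a ^ p.1 * b ^ p.2 * q ^ (p.1 * p.2) /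
      (RGB.Qp q q p.1 * RGB.Qp q q p.2)) =
      qPochInf (a * b) q / (qPochInf a q * qPochInf b q) := by
    simp only [qPochInf]
    have hPa : (∏' n : ℕ, (1 - a * q ^ n)) ≠ 0 := RGB.tprod_one_sub_ne_zero hqn ha
    have hPb : (∏' n : ℕ, (1 - b * q ^ n)) ≠ 0 := RGB.tprod_one_sub_ne_zero hqn hb
    have hQmne : ∀ m : ℕ, RGB.Qp q q m ≠ 0 := RGB.Qp_q_ne_zero hqn
    have hterm : ∀ m n : ℕ, a ^ m * b ^ n * q ^ (m * n) / (RGB.Qp q q m * RGB.Qp q q n) =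
        (a ^ m / RGB.Qp q q m) * (RGB.gC 0 q n * (b * q ^ m) ^ n) := by
      intro m n
      have h0 : RGB.Qp 0 q n = 1 := by simp [RGB.Qp]
      simp only [RGB.gC, h0]
      rw [mul_pow, ← pow_mul]
      ring
    have hbz0 : ∀ m : ℕ, b * q ^ m ≠ 0 := fun m => mul_ne_zero hb0 (pow_ne_zero _ hq0)
    have hbz : ∀ m : ℕ, ‖b * q ^ m‖ < 1 := by
      intro m
      rw [norm_mul, norm_pow]
      calc ‖b‖ * ‖q‖ ^ m ≤ ‖b‖ * 1 :=
            mul_le_mul_of_nonneg_left (pow_le_one₀ (norm_nonneg q) hqn.le) (norm_nonneg b)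
        _ < 1 := by rwa [mul_one]
    have hWs : Summable (fun p : ℕ × ℕ => a ^ p.1 * b ^ p.2 * q ^ (p.1 * p.2) /
        (RGB.Qp q q p.1 * RGB.Qp q q p.2)) := by
      refine Summable.of_norm (Summable.of_nonneg_of_le (fun p => norm_nonneg _)
        (fun p => ?_) (Summable.of_nonneg_of_le (fun p => by positivity) hbound huv))
      rw [norm_div, norm_mul, norm_mul, norm_mul, norm_pow, norm_pow, norm_pow]
    have hinnerS : ∀ m : ℕ, Summable fun n =>
        a ^ m * b ^ n * q ^ (m * n) / (RGB.Qp q q m * RGB.Qp q q n) := fun m =>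
      ((RGB.summable_gC hqn (by simp) (hbz0 m) (hbz m)).mul_left
        (a ^ m / RGB.Qp q q m)).congr fun n => (hterm m n).symm
    have hinner : ∀ m : ℕ, (∑' n, a ^ m * b ^ n * q ^ (m * n) /
        (RGB.Qp q q m * RGB.Qp q q n)) =
        (a ^ m / RGB.Qp q q m) * (RGB.Qp b q m / ∏' n, (1 - b * q ^ n)) := by
      intro m
      have hX : (∑' n, RGB.gC 0 q n * (b * q ^ m) ^ n) *
          (∏' n, (1 - b * q ^ m * q ^ n)) = 1 := by
        have h := RGB.qbinom hq0 hqn (c := (0 : ℂ)) (by simp) (hbz0 m) (hbz m)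
        simpa using h
      have hshift : (∏' n, (1 - b * q ^ m * q ^ n)) * RGB.Qp b q m =
          ∏' n, (1 - b * q ^ n) := RGB.tprod_shift hqn hb m
      calc (∑' n, a ^ m * b ^ n * q ^ (m * n) / (RGB.Qp q q m * RGB.Qp q q n))
          = (a ^ m / RGB.Qp q q m) * ∑' n, RGB.gC 0 q n * (b * q ^ m) ^ n := by
            rw [tsum_congr (hterm m), tsum_mul_left]
        _ = (a ^ m / RGB.Qp q q m) * (RGB.Qp b q m / ∏' n, (1 - b * q ^ n)) := by
            congr 1
            rw [eq_div_iff hPb, ← hshift, ← mul_assoc, hX, one_mul]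
    calc (∑' p : ℕ × ℕ, a ^ p.1 * b ^ p.2 * q ^ (p.1 * p.2) /
        (RGB.Qp q q p.1 * RGB.Qp q q p.2))
        = ∑' (m : ℕ) (n : ℕ), a ^ m * b ^ n * q ^ (m * n) /
            (RGB.Qp q q m * RGB.Qp q q n) := Summable.tsum_prod' hWs hinnerS
      _ = ∑' m : ℕ, (a ^ m / RGB.Qp q q m) * (RGB.Qp b q m / ∏' n, (1 - b * q ^ n)) :=
            tsum_congr hinner
      _ = (∑' m : ℕ, RGB.gC b q m * a ^ m) * (∏' n, (1 - b * q ^ n))⁻¹ := by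
            rw [← tsum_mul_right]
            refine tsum_congr fun m => ?_
            simp only [RGB.gC]
            ring
      _ = ((∏' n, (1 - a * b * q ^ n)) / ∏' n, (1 - a * q ^ n)) *
            (∏' n, (1 - b * q ^ n))⁻¹ := by
            have h := RGB.qbinom hq0 hqn (c := b) hb ha0 ha
            congr 1
            rw [eq_div_iff hPa, h]
            exact tprod_congr fun n => by ring
      _ = (∏' n, (1 - a * b * q ^ n)) /
            ((∏' n, (1 - a * q ^ n)) * ∏' n, (1 - b * q ^ n)) := by
            rw [← div_eq_mul_inv, div_div]
  -- Step 5: the constant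
  have hJ : ((π : ℂ) / -((π : ℂ) * Complex.I * τ)) ^ (1 / 2 : ℂ) =
      ((-Complex.I * τ) ^ (1 / 2 : ℂ))⁻¹ := by
    have hτ0 : τ ≠ 0 := fun h => by rw [h] at hτ; simp at hτ
    have hπ : (π : ℂ) ≠ 0 := Complex.ofReal_ne_zero.mpr Real.pi_ne_zero
    have h1 : (π : ℂ) / -((π : ℂ) * Complex.I * τ) = (-Complex.I * τ)⁻¹ := by
      field_simp
    have hargne : (-Complex.I * τ).arg ≠ π := by
      intro h
      rw [Complex.arg_eq_pi_iff] at h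
      have hre : (-Complex.I * τ).re = τ.im := by simp [Complex.mul_re]
      rw [hre] at h
      linarith [h.1]
    rw [h1, Complex.inv_cpow _ _ hargne]
  calc (∫ x : ℝ,
      qPochInf (-a * Complex.exp (2 * (π : ℂ) * Complex.I * τ * (1 / 2 + (x : ℂ)))) q *
      qPochInf (-b * Complex.exp (2 * (π : ℂ) * Complex.I * τ * (1 / 2 - (x : ℂ)))) q *
      Complex.exp ((π : ℂ) * Complex.I * τ * (x : ℂ) ^ 2))
      = ∫ x : ℝ, ∑' p : ℕ × ℕ, RGB.Tf τ a b q p x :=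
        integral_congr_ae (Filter.Eventually.of_forall hpt)
    _ = ∑' p : ℕ × ℕ, ∫ x : ℝ, RGB.Tf τ a b q p x := hswap.symm
    _ = ∑' p : ℕ × ℕ, ((π : ℂ) / -((π : ℂ) * Complex.I * τ)) ^ (1 / 2 : ℂ) *
        (a ^ p.1 * b ^ p.2 * q ^ (p.1 * p.2) / (RGB.Qp q q p.1 * RGB.Qp q q p.2)) :=
        tsum_congr fun p => RGB.Tf_integral hτ hq p
    _ = ((π : ℂ) / -((π : ℂ) * Complex.I * τ)) ^ (1 / 2 : ℂ) *
        ∑' p : ℕ × ℕ, (a ^ p.1 * b ^ p.2 * q ^ (p.1 * p.2) /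
          (RGB.Qp q q p.1 * RGB.Qp q q p.2)) := tsum_mul_left
    _ = ((-Complex.I * τ) ^ (1 / 2 : ℂ))⁻¹ *
        (qPochInf (a * b) q / (qPochInf a q * qPochInf b q)) := by rw [hW, hJ]
end
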